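/- arXiv:2108.04280 — 6 statements merged into one kernel-verified Lean document; each statement's English description precedes it below -/
import Mathlib

section
/- The function r ↦ r²/Δ(r) − 1/(2κ_+ (r − r_+)), defined on (r_−, ∞) \ {r_+}, extends to a real-analytic function on all of (r_−, ∞). Consequently, every antiderivative r* of r ↦ r²/Δ(r) on (r_+, ∞) is of the form r*(r) = (1/(2κ_+)) log(r − r_+) + f_*(r), where f_* is real-analytic on (r_−, ∞). -/
open Set

set_option maxHeartbeats 2000000 in
/-- the function r ↦ r²/Δ(r) − 1/(2κ₊(r − r₊)) extends real-analytically
to (r_−, ∞); consequently every antiderivative of r²/Δ on (r₊, ∞) has the form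
(1/(2κ₊)) log(r − r₊) + f₊(r) with f₊ real-analytic on (r_−, ∞). -/
theorem stmt_1 (M Q l : ℝ) (hM : 0 < M) (hQ : Q ≠ 0) (hl : 0 < l)
    (Δ : ℝ → ℝ) (hΔ : ∀ r, Δ r = r ^ 2 - 2 * M * r + r ^ 4 / l ^ 2 + Q ^ 2)
    (rm rp : ℝ) (hrm : 0 < rm) (hmp : rm < rp)
    (hΔm : Δ rm = 0) (hΔp : Δ rp = 0)
    (honly : ∀ r, 0 < r → Δ r = 0 → r = rm ∨ r = rp)
    (κp : ℝ) (hκp : κp = deriv Δ rp / (2 * rp ^ 2)) :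
    (∃ F : ℝ → ℝ, AnalyticOnNhd ℝ F (Ioi rm) ∧
      ∀ r ∈ Ioi rm, r ≠ rp → F r = r ^ 2 / Δ r - 1 / (2 * κp * (r - rp))) ∧
    (∀ rstar : ℝ → ℝ, (∀ r ∈ Ioi rp, HasDerivAt rstar (r ^ 2 / Δ r) r) →
      ∃ fstar : ℝ → ℝ, AnalyticOnNhd ℝ fstar (Ioi rm) ∧
        ∀ r ∈ Ioi rp, rstar r = (1 / (2 * κp)) * Real.log (r - rp) + fstar r) := by
  have hl2 : (0:ℝ) < l ^ 2 := by positivity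
  have hl2' : (l:ℝ) ^ 2 ≠ 0 := ne_of_gt hl2
  have hrp : 0 < rp := hrm.trans hmp
  set s : ℝ := rm + rp with hs
  set u : ℝ := rm ^ 2 + rm * rp + rp ^ 2 + l ^ 2 with hu
  have e1 : rm ^ 2 * l ^ 2 - 2 * M * rm * l ^ 2 + rm ^ 4 + Q ^ 2 * l ^ 2 = 0 := by
    have := hΔm; rw [hΔ] at this; field_simp at this; linarith
  have e2 : rp ^ 2 * l ^ 2 - 2 * M * rp * l ^ 2 + rp ^ 4 + Q ^ 2 * l ^ 2 = 0 := by
    have := hΔp; rw [hΔ] at this; field_simp at this; linarith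
  have hM2 : 2 * M * l ^ 2 = (rm + rp) * (l ^ 2 + rm ^ 2 + rp ^ 2) := by
    have h0 : (rp - rm) * (2 * M * l ^ 2 - (rm + rp) * (l ^ 2 + rm ^ 2 + rp ^ 2)) = 0 := by
      linear_combination e1 - e2
    rcases mul_eq_zero.mp h0 with h | h
    · exact absurd h (sub_ne_zero.mpr (ne_of_gt hmp))
    · linarith
  have hQ2 : Q ^ 2 * l ^ 2 = rm * rp * (l ^ 2 + rm ^ 2 + rm * rp + rp ^ 2) := by
    linear_combination e1 + rm * hM2
  have key : ∀ r, Δ r * l ^ 2 = (r - rm) * (r - rp) * (r ^ 2 + s * r + u) := by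
    intro r
    rw [hΔ]; field_simp; linear_combination -r * hM2 + hQ2
  have hGl : ∀ r, 0 < r → 0 < r ^ 2 + s * r + u := by
    intro r hr; rw [hs, hu]; nlinarith
  have hD : ∀ r, HasDerivAt Δ (2*r - 2*M + 4*r^3/l^2) r := by
    intro r
    have hfun : (fun x => x ^ 2 - 2 * M * x + x ^ 4 / l ^ 2 + Q ^ 2) = Δ := by
      funext x; rw [hΔ]
    rw [← hfun]
    have h1 : HasDerivAt (fun x:ℝ => x^2) (2*r) r := by simpa using hasDerivAt_pow 2 r
    have h2 : HasDerivAt (fun x:ℝ => 2*M*x) (2*M) r := by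
      simpa using (hasDerivAt_id r).const_mul (2*M)
    have h3 : HasDerivAt (fun x:ℝ => x^4/l^2) (4*r^3/l^2) r := by
      simpa using (hasDerivAt_pow 4 r).div_const (l^2)
    exact ((h1.sub h2).add h3).add_const (Q^2)
  have hderiv : deriv Δ rp = 2*rp - 2*M + 4*rp^3/l^2 := (hD rp).deriv
  have hKp2 : 2*κp*l^2*rp^2 = (rp - rm)*(rp^2 + s*rp + u) := by
    have h2κ : 2*κp*rp^2 = 2*rp - 2*M + 4*rp^3/l^2 := by
      rw [hκp, hderiv]; field_simp
    have h3 : 2*κp*rp^2*l^2 = (2*rp-2*M)*l^2 + 4*rp^3 := by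
      rw [h2κ]; field_simp
    rw [hs, hu]; linear_combination h3 - hM2
  have hκpos : 0 < κp := by
    have hpos : 0 < (rp - rm)*(rp^2 + s*rp + u) :=
      mul_pos (sub_pos.mpr hmp) (hGl rp hrp)
    nlinarith [mul_pos hl2 (pow_pos hrp 2)]
  have hκ0 : (2:ℝ)*κp ≠ 0 := by positivity
  set F : ℝ → ℝ := fun r => (-r^2 + (2*κp*l^2 - 2*rp)*r + (2*κp*l^2*rp - 3*rp^2 - l^2)) /
      (2*κp*((r - rm)*(r^2 + s*r + u))) with hFdef
  have hnum : ∀ r, (r - rp) * (-r^2 + (2*κp*l^2 - 2*rp)*r + (2*κp*l^2*rp - 3*rp^2 - l^2))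
      = 2*κp*l^2*r^2 - (r - rm)*(r^2 + s*r + u) := by
    intro r; rw [hs, hu]; rw [hs, hu] at hKp2; linear_combination -hKp2
  have hF_eq : ∀ r ∈ Ioi rm, r ≠ rp → F r = r^2/Δ r - 1/(2*κp*(r-rp)) := by
    intro r hr hne
    have hrm' : r - rm ≠ 0 := sub_ne_zero.mpr (ne_of_gt hr)
    have hrp' : r - rp ≠ 0 := sub_ne_zero.mpr hne
    have hGlr : r^2 + s*r + u ≠ 0 := ne_of_gt (hGl r (hrm.trans hr))
    have hΔr : Δ r = (r - rm) * (r - rp) * (r^2 + s*r + u) / l^2 := by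
      rw [eq_div_iff hl2']; exact key r
    have hΔne : Δ r ≠ 0 := by
      rw [hΔr]
      exact div_ne_zero (mul_ne_zero (mul_ne_zero hrm' hrp') hGlr) hl2'
    have hDen : 2*κp*((r-rm)*(r-rp)*(r^2+s*r+u)) ≠ 0 := by
      exact mul_ne_zero hκ0 (mul_ne_zero (mul_ne_zero hrm' hrp') hGlr)
    have h1 : r^2 / Δ r = (2*κp*l^2*r^2) / (2*κp*((r-rm)*(r-rp)*(r^2+s*r+u))) := by
      rw [hΔr, div_eq_div_iff (by rwa [← hΔr]) hDen]; field_simp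
    have h2 : 1/(2*κp*(r-rp)) = ((r-rm)*(r^2+s*r+u)) / (2*κp*((r-rm)*(r-rp)*(r^2+s*r+u))) := by
      rw [div_eq_div_iff (mul_ne_zero hκ0 hrp') hDen]; ring
    rw [hFdef, h1, h2, div_sub_div_same, ← hnum r,
      show 2*κp*((r-rm)*(r-rp)*(r^2+s*r+u)) = (r-rp)*(2*κp*((r-rm)*(r^2+s*r+u))) by ring,
      mul_div_mul_left _ _ hrp']
  have hF_an : AnalyticOnNhd ℝ F (Ioi rm) := by
    intro x hx
    have hx' : rm < x := hx
    have hd : 2*κp*((x - rm)*(x^2 + s*x + u)) ≠ 0 := by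
      have := hGl x (hrm.trans hx')
      have h1 : (0:ℝ) < x - rm := sub_pos.mpr hx'
      positivity
    exact AnalyticAt.div
      (((analyticAt_id.pow 2).neg.add ((analyticAt_const).mul analyticAt_id)).add analyticAt_const)
      ((analyticAt_const).mul ((analyticAt_id.sub analyticAt_const).mul
        (((analyticAt_id.pow 2).add ((analyticAt_const).mul analyticAt_id)).add analyticAt_const))) hd
  -- Part 2 constants
  have hGlrm : (0:ℝ) < rm^2 + s*rm + u := hGl rm hrm
  have hGlrm' : rm^2 + s*rm + u ≠ 0 := ne_of_gt hGlrm
  obtain ⟨a, ha⟩ : ∃ a : ℝ, 2*κp*a*(rm^2 + s*rm + u)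
      = -rm^2 + (2*κp*l^2 - 2*rp)*rm + (2*κp*l^2*rp - 3*rp^2 - l^2) :=
    ⟨(-rm^2 + (2*κp*l^2 - 2*rp)*rm + (2*κp*l^2*rp - 3*rp^2 - l^2))/(2*κp*(rm^2 + s*rm + u)),
      by rw [mul_div_assoc', div_mul_eq_mul_div, div_eq_iff (mul_ne_zero hκ0 hGlrm')]; ring⟩
  obtain ⟨b, hb⟩ : ∃ b : ℝ, 2*κp*(a+b) = -1 := ⟨-(1/(2*κp)) - a, by field_simp; ring⟩
  obtain ⟨c, hc⟩ : ∃ c : ℝ, 2*κp*(a*s + c - b*rm) = 2*κp*l^2 - 2*rp :=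
    ⟨(2*κp*l^2 - 2*rp)/(2*κp) - a*s + b*rm, by field_simp; ring⟩
  have E0 : 2*κp*(a*u - c*rm) = 2*κp*l^2*rp - 3*rp^2 - l^2 := by
    linear_combination ha - rm^2*hb - rm*hc
  have hPF : ∀ r, 2*κp*(a*(r^2 + s*r + u) + (b*r+c)*(r-rm))
      = -r^2 + (2*κp*l^2 - 2*rp)*r + (2*κp*l^2*rp - 3*rp^2 - l^2) := by
    intro r; linear_combination r^2*hb + r*hc + E0
  have hFval : ∀ r, rm < r → F r = a*(r-rm)⁻¹ + (b*r+c)/(r^2+s*r+u) := by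
    intro r hr
    have hrm' : r - rm ≠ 0 := sub_ne_zero.mpr (ne_of_gt hr)
    have hGlr : r^2 + s*r + u ≠ 0 := ne_of_gt (hGl r (hrm.trans hr))
    have hFr : F r = (-r^2 + (2*κp*l^2 - 2*rp)*r + (2*κp*l^2*rp - 3*rp^2 - l^2)) /
        (2*κp*((r - rm)*(r^2 + s*r + u))) := rfl
    rw [hFr, ← hPF r]
    rw [mul_div_mul_left _ _ hκ0, add_div, mul_div_mul_right _ _ hGlr, mul_comm (b*r+c), mul_div_mul_left _ _ hrm', div_eq_mul_inv]
  -- square root and complex constants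
  have h4u : (0:ℝ) < 4*u - s^2 := by
    have h : 4*u - s^2 = 3*rm^2 + 2*rm*rp + 3*rp^2 + 4*l^2 := by rw [hs, hu]; ring
    rw [h]; linarith [mul_pos hrm hrp, hl2, sq_nonneg rm, sq_nonneg rp]
  obtain ⟨w, hwpos, hw2⟩ : ∃ w : ℝ, 0 < w ∧ w^2 = 4*u - s^2 :=
    ⟨Real.sqrt (4*u - s^2), Real.sqrt_pos.mpr h4u, Real.sq_sqrt h4u.le⟩
  have hw0 : w ≠ 0 := ne_of_gt hwpos
  obtain ⟨z, hzre, hzim⟩ : ∃ z : ℂ, z.re = -s/2 ∧ z.im = w/2 := ⟨⟨-s/2, w/2⟩, rfl, rfl⟩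
  obtain ⟨β, hβre, hβim⟩ : ∃ β : ℂ, β.re = b/2 ∧ β.im = (b*s/2 - c)/w :=
    ⟨⟨b/2, (b*s/2 - c)/w⟩, rfl, rfl⟩
  have hslit2 : ∀ r : ℝ, ((r:ℂ) - z) ∈ Complex.slitPlane := by
    intro r
    refine Complex.mem_slitPlane_iff.mpr (Or.inr ?_)
    rw [Complex.sub_im, Complex.ofReal_im, hzim]
    intro h; apply hw0; linarith
  have hslit1 : ∀ r : ℝ, rm < r → ((r:ℂ) - (rm:ℂ)) ∈ Complex.slitPlane := by
    intro r hr
    rw [← Complex.ofReal_sub]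
    exact Complex.ofReal_mem_slitPlane.mpr (by linarith)
  set Φ : ℝ → ℝ := fun r : ℝ =>
      a * (Complex.log ((r:ℂ) - (rm:ℂ))).re + 2*(β * Complex.log ((r:ℂ) - z)).re with hΦdef
  have hΦan : AnalyticOnNhd ℝ Φ (Ioi rm) := by
    intro x hx
    have hx' : rm < x := hx
    have h1 : AnalyticAt ℝ (fun r : ℝ => ((r:ℂ) - (rm:ℂ))) x :=
      (Complex.ofRealCLM.analyticAt x).sub analyticAt_const
    have h2 : AnalyticAt ℝ (fun r : ℝ => ((r:ℂ) - z)) x :=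
      (Complex.ofRealCLM.analyticAt x).sub analyticAt_const
    have hlog1 : AnalyticAt ℝ (fun r : ℝ => Complex.log ((r:ℂ) - (rm:ℂ))) x := by
      have h := AnalyticAt.comp (f := fun r : ℝ => ((r:ℂ) - (rm:ℂ)))
        ((analyticAt_clog (hslit1 x hx')).restrictScalars) h1
      exact h
    have hlog2 : AnalyticAt ℝ (fun r : ℝ => Complex.log ((r:ℂ) - z)) x := by
      have h := AnalyticAt.comp (f := fun r : ℝ => ((r:ℂ) - z))
        ((analyticAt_clog (hslit2 x)).restrictScalars) h2
      exact h
    have hre1 : AnalyticAt ℝ (fun r : ℝ => (Complex.log ((r:ℂ) - (rm:ℂ))).re) x := by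
      have h := AnalyticAt.comp (g := fun v : ℂ => v.re)
        (f := fun r : ℝ => Complex.log ((r:ℂ) - (rm:ℂ))) (Complex.reCLM.analyticAt _) hlog1
      exact h
    have hre2 : AnalyticAt ℝ (fun r : ℝ => (β * Complex.log ((r:ℂ) - z)).re) x := by
      have h := AnalyticAt.comp (g := fun v : ℂ => v.re)
        (f := fun r : ℝ => β * Complex.log ((r:ℂ) - z)) (Complex.reCLM.analyticAt _)
        (analyticAt_const.mul hlog2)
      exact h
    exact (analyticAt_const.mul hre1).add (analyticAt_const.mul hre2)
  have hΦderiv : ∀ r, rm < r → HasDerivAt Φ (a*(r-rm)⁻¹ + (b*r+c)/(r^2+s*r+u)) r := by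
    intro r hr
    have hd1c : HasDerivAt (fun y : ℂ => Complex.log (y - (rm:ℂ))) (((r:ℂ) - rm)⁻¹) (r:ℂ) := by
      simpa [Function.comp_def] using (Complex.hasDerivAt_log (hslit1 r hr)).comp (r:ℂ)
        ((hasDerivAt_id (r:ℂ)).sub_const (rm:ℂ))
    have hd1 : HasDerivAt (fun x : ℝ => (Complex.log ((x:ℂ) - (rm:ℂ))).re)
        ((((r:ℂ) - rm)⁻¹).re) r := hd1c.real_of_complex
    have hre1 : ((((r:ℂ) - (rm:ℂ))⁻¹).re) = (r - rm)⁻¹ := by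
      rw [← Complex.ofReal_sub, ← Complex.ofReal_inv, Complex.ofReal_re]
    have hd2c : HasDerivAt (fun y : ℂ => β * Complex.log (y - z)) (β * ((r:ℂ) - z)⁻¹) (r:ℂ) := by
      simpa using ((Complex.hasDerivAt_log (hslit2 r)).comp (r:ℂ)
        ((hasDerivAt_id (r:ℂ)).sub_const z)).const_mul β
    have hd2 : HasDerivAt (fun x : ℝ => (β * Complex.log ((x:ℂ) - z)).re)
        ((β * ((r:ℂ) - z)⁻¹).re) r := hd2c.real_of_complex
    have hGlr : (0:ℝ) < r^2 + s*r + u := hGl r (hrm.trans hr)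
    have hnv : Complex.normSq ((r:ℂ) - z) = r^2 + s*r + u := by
      rw [Complex.normSq_apply, Complex.sub_re, Complex.sub_im, Complex.ofReal_re,
        Complex.ofReal_im, hzre, hzim]
      linear_combination hw2/4
    have hre2 : 2*((β * ((r:ℂ) - z)⁻¹).re) = (b*r+c)/(r^2+s*r+u) := by
      rw [← div_eq_mul_inv, Complex.div_re, hnv, Complex.sub_re, Complex.sub_im,
        Complex.ofReal_re, Complex.ofReal_im, hzre, hzim, hβre, hβim]
      field_simp
      ring
    have h := (hd1.const_mul a).add (hd2.const_mul 2)
    rw [hre1, hre2] at h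
    exact h
  -- conclusion
  have hpart2 : ∀ rstar : ℝ → ℝ, (∀ r ∈ Ioi rp, HasDerivAt rstar (r ^ 2 / Δ r) r) →
      ∃ fstar : ℝ → ℝ, AnalyticOnNhd ℝ fstar (Ioi rm) ∧
        ∀ r ∈ Ioi rp, rstar r = (1 / (2 * κp)) * Real.log (r - rp) + fstar r := by
    intro rstar hrstar
    set g : ℝ → ℝ := fun r => rstar r - ((1/(2*κp))*Real.log (r-rp) + Φ r) with hgdef
    have hg : ∀ x ∈ Ioi rp, HasDerivAt g 0 x := by
      intro x hx
      have hx' : rp < x := hx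
      have hxm : rm < x := hmp.trans hx'
      have hxp0 : x - rp ≠ 0 := sub_ne_zero.mpr (ne_of_gt hx')
      have hlog : HasDerivAt (fun r : ℝ => (1/(2*κp))*Real.log (r-rp))
          ((1/(2*κp))*(x-rp)⁻¹) x := by
        simpa using ((Real.hasDerivAt_log hxp0).comp x
          ((hasDerivAt_id x).sub_const rp)).const_mul (1/(2*κp))
      have hΦd := hΦderiv x hxm
      have htot := (hrstar x hx).sub (hlog.add hΦd)
      have hval : x^2/Δ x - ((1/(2*κp))*(x-rp)⁻¹ + (a*(x-rm)⁻¹ + (b*x+c)/(x^2+s*x+u))) = 0 := by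
        have hκ' : κp ≠ 0 := ne_of_gt hκpos
        have hΔx : Δ x ≠ 0 := by
          have hk := key x
          intro h0; rw [h0, zero_mul] at hk
          exact (mul_ne_zero (mul_ne_zero (sub_ne_zero.mpr (ne_of_gt hxm)) hxp0)
            (ne_of_gt (hGl x (hrm.trans hxm)))) hk.symm
        rw [← hFval x hxm, hF_eq x (mem_Ioi.mpr hxm) (ne_of_gt hx')]
        field_simp
        ring
      rw [hval] at htot
      exact htot
    have hgdiff : DifferentiableOn ℝ g (Ioi rp) := fun x hx =>
      (hg x hx).differentiableAt.differentiableWithinAt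
    have hgf : ∀ x ∈ Ioi rp, fderivWithin ℝ g (Ioi rp) x = 0 := by
      intro x hx
      rw [fderivWithin_of_isOpen isOpen_Ioi hx, (hg x hx).hasFDerivAt.fderiv]
      ext
      simp
    have hconst : ∀ x ∈ Ioi rp, g x = g (rp+1) := fun x hx =>
      (convex_Ioi rp).is_const_of_fderivWithin_eq_zero hgdiff hgf hx
        (mem_Ioi.mpr (lt_add_one rp))
    refine ⟨fun r => Φ r + g (rp+1), hΦan.add analyticOnNhd_const, ?_⟩
    intro r hr
    have h1 := hconst r hr
    have h2 : g r = rstar r - ((1/(2*κp))*Real.log (r-rp) + Φ r) := rfl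
    rw [h2] at h1
    linarith [h1]
  exact ⟨⟨F, hF_an, hF_eq⟩, hpart2⟩
end

section
/- Every antiderivative r* of r ↦ r²/Δ(r) on the interval (r_−, r_+) is a real-analytic, strictly decreasing bijection from (r_−, r_+) onto ℝ; in particular r*(r) → −∞ as r → r_+ from below and r*(r) → +∞ as r → r_− from above. -/
open Set Filter

/-- An antiderivative of a real-analytic function is real-analytic. -/
lemma analyticAt_of_hasDerivAt_analytic {f g : ℝ → ℝ} {x0 : ℝ}
    (hf : ∀ᶠ x in nhds x0, HasDerivAt f (g x) x) (hg : AnalyticAt ℝ g x0) :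
    AnalyticAt ℝ f x0 := by
  obtain ⟨p, R, hR⟩ := hg
  obtain ⟨r, hr0, hrR⟩ := ENNReal.lt_iff_exists_nnreal_btwn.mp hR.r_pos
  obtain ⟨ε, hε0, hε⟩ := Metric.eventually_nhds_iff.mp hf
  have hr0' : (0:ℝ) < (r:ℝ) := by exact_mod_cast hr0
  set ρ : ℝ := min (r:ℝ) ε with hρdef
  have hρ0 : 0 < ρ := lt_min hr0' hε0
  have hρr : ρ ≤ (r:ℝ) := min_le_left _ _
  set t := Metric.ball x0 ρ with htdef
  set a : ℕ → ℝ := fun n => p.coeff n with hadef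
  set c : ℕ → ℝ := fun n => match n with
    | 0 => f x0
    | (k+1) => a k / (k+1) with hcdef
  set gn : ℕ → ℝ → ℝ := fun n z => c (n+1) * (z - x0)^(n+1) with hgndef
  set g' : ℕ → ℝ → ℝ := fun n z => a n * (z - x0)^n with hg'def
  set u : ℕ → ℝ := fun n => ‖p n‖ * (r:ℝ)^n with hudef
  have hu : Summable u := p.summable_norm_mul_pow (hrR.trans_le hR.r_le)
  have hnc : ∀ n : ℕ, ((n:ℝ) + 1) ≠ 0 := fun n => by positivity
  have hderiv : ∀ n z, HasDerivAt (gn n) (g' n z) z := by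
    intro n z
    have h1 : HasDerivAt (fun z : ℝ => (z - x0)^(n+1)) (((n:ℝ)+1) * (z - x0)^n) z := by
      have h := ((hasDerivAt_id z).sub_const x0).pow (n+1)
      simp at h
      exact h
    have h2 := h1.const_mul (c (n+1))
    refine h2.congr_deriv ?_
    simp only [hg'def, hcdef]
    field_simp
  have hnorm : ∀ n, |a n| = ‖p n‖ := by
    intro n
    rw [hadef]
    exact (p.norm_apply_eq_norm_coef (n := n)).symm
  have hbound : ∀ n, ∀ y ∈ t, ‖g' n y‖ ≤ u n := by
    intro n y hy
    have hyd : |y - x0| ≤ (r:ℝ) := by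
      have := Metric.mem_ball.mp hy
      rw [Real.dist_eq] at this
      linarith [hρr]
    calc ‖g' n y‖ = |a n| * |y - x0|^n := by
          simp [hg'def, abs_mul, abs_pow]
      _ ≤ ‖p n‖ * (r:ℝ)^n := by
          rw [hnorm n]
          exact mul_le_mul_of_nonneg_left (pow_le_pow_left₀ (abs_nonneg _) hyd n) (norm_nonneg _)
  have hg0 : Summable fun n => gn n x0 := by
    apply summable_of_ne_finset_zero (s := ∅)
    intro n _
    simp [hgndef]
  have key : ∀ z ∈ t, HasDerivAt (fun w => ∑' n, gn n w) (g z) z := by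
    intro z hz
    have H := hasDerivAt_tsum_of_isPreconnected hu Metric.isOpen_ball
      (convex_ball x0 ρ).isPreconnected (fun n y _ => hderiv n y)
      (fun n y hy => hbound n y hy) (Metric.mem_ball_self hρ0) hg0 hz
    have hzR : z ∈ EMetric.ball x0 R := by
      have h1 : z ∈ Metric.ball x0 (r:ℝ) := Metric.mem_ball.mpr ((Metric.mem_ball.mp hz).trans_le hρr)
      rw [← Metric.emetric_ball_nnreal] at h1
      exact EMetric.ball_subset_ball hrR.le h1
    have hsum : HasSum (fun n => p n fun _ => z - x0) (g z) := hR.hasSum_sub hzR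
    have : (∑' n, g' n z) = g z := by
      rw [← hsum.tsum_eq]
      congr 1
      ext n
      rw [p.apply_eq_pow_smul_coeff, smul_eq_mul, hg'def, hadef]
      ring
    rwa [this] at H
  set F := fun w => ∑' n, gn n w with hFdef
  have hz' : ∀ z ∈ t, HasDerivAt (fun w => f w - F w) 0 z := by
    intro z hz
    have h1 : HasDerivAt f (g z) z := by
      apply hε
      rw [Real.dist_eq]
      have := Metric.mem_ball.mp hz
      rw [Real.dist_eq] at this
      exact this.trans_le (min_le_right _ _)
    have h := h1.sub (key z hz)
    rw [sub_self] at h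
    exact h
  have hconst : ∀ z ∈ t, f z = F z + f x0 := by
    intro z hz
    have hF0 : F x0 = 0 := by
      have : ∀ n, gn n x0 = 0 := fun n => by simp [hgndef]
      simp [hFdef, this]
    have := (convex_ball x0 ρ).is_const_of_fderivWithin_eq_zero (𝕜 := ℝ)
      (fun w hw => ((hz' w hw).differentiableAt).differentiableWithinAt)
      (fun w hw => by
        rw [fderivWithin_of_isOpen Metric.isOpen_ball hw, (hz' w hw).hasFDerivAt.fderiv]
        exact ContinuousLinearMap.ext fun x => by simp) hz (Metric.mem_ball_self hρ0)
    have h2 : f z - F z = f x0 - F x0 := this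
    rw [hF0] at h2
    linarith
  have hq : HasFPowerSeriesAt (fun z => F z + f x0) (FormalMultilinearSeries.ofScalars ℝ c) x0 := by
    rw [hasFPowerSeriesAt_iff']
    filter_upwards [Metric.ball_mem_nhds x0 hρ0] with z hz
    have hcoeff : ∀ n, (FormalMultilinearSeries.ofScalars ℝ c).coeff n = c n := by
      intro n
      simp [FormalMultilinearSeries.coeff, FormalMultilinearSeries.ofScalars, List.prod_ofFn]
    have hsummable : Summable (fun n => gn n z) := by
      apply Summable.of_norm_bounded (hu.mul_left ρ)
      intro n
      have hyd : |z - x0| ≤ (r:ℝ) := by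
        have := Metric.mem_ball.mp hz
        rw [Real.dist_eq] at this
        linarith [hρr]
      have hyd2 : |z - x0| ≤ ρ := by
        have := Metric.mem_ball.mp hz
        rw [Real.dist_eq] at this
        linarith
      have hcn : |c (n+1)| ≤ ‖p n‖ := by
        rw [hcdef]
        simp only [abs_div]
        rw [← hnorm n]
        apply div_le_self (abs_nonneg _)
        rw [abs_of_pos (by positivity)]
        linarith [Nat.cast_nonneg (α := ℝ) n]
      calc ‖gn n z‖ = |c (n+1)| * (|z - x0|^n * |z - x0|) := by
            simp [hgndef, abs_mul, abs_pow, pow_succ]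
        _ ≤ ‖p n‖ * ((r:ℝ)^n * ρ) := by
            apply mul_le_mul hcn _ (by positivity) (norm_nonneg _)
            exact mul_le_mul (pow_le_pow_left₀ (abs_nonneg _) hyd n) hyd2 (abs_nonneg _) (by positivity)
        _ = ρ * u n := by rw [hudef]; ring
    have hshift : HasSum (fun n => c (n+1) * (z - x0)^(n+1)) (F z) := hsummable.hasSum
    have hshift' : HasSum (fun n => (z - x0)^(n+1) • (FormalMultilinearSeries.ofScalars ℝ c).coeff (n+1)) (F z) := by
      convert hshift using 2 with n
      rw [hcoeff, smul_eq_mul]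
      ring
    have hfull := (hasSum_nat_add_iff (f := fun n => (z - x0)^n • (FormalMultilinearSeries.ofScalars ℝ c).coeff n) 1).mp hshift'
    convert hfull using 1
    simp [hcoeff, hcdef]
  have hfa : AnalyticAt ℝ (fun z => F z + f x0) x0 := ⟨_, hq⟩
  apply hfa.congr
  filter_upwards [Metric.ball_mem_nhds x0 hρ0] with z hz
  exact (hconst z hz).symm


set_option maxHeartbeats 1000000 in
/-- every antiderivative of r ↦ r²/Δ(r) on (r₋, r₊) is a real-analytic,
strictly decreasing bijection from (r₋, r₊) onto ℝ, tending to −∞ at r₊⁻ and to +∞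
at r₋⁺. -/
theorem stmt_3 (M Q l : ℝ) (hM : 0 < M) (hQ : Q ≠ 0) (hl : 0 < l)
    (Δ : ℝ → ℝ) (hΔ : ∀ r, Δ r = r ^ 2 - 2 * M * r + r ^ 4 / l ^ 2 + Q ^ 2)
    (rm rp : ℝ) (hrm : 0 < rm) (hmp : rm < rp)
    (hΔm : Δ rm = 0) (hΔp : Δ rp = 0)
    (honly : ∀ r, 0 < r → Δ r = 0 → r = rm ∨ r = rp) :
    ∀ rstar : ℝ → ℝ, (∀ r ∈ Ioo rm rp, HasDerivAt rstar (r ^ 2 / Δ r) r) →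
      AnalyticOnNhd ℝ rstar (Ioo rm rp) ∧
      StrictAntiOn rstar (Ioo rm rp) ∧
      BijOn rstar (Ioo rm rp) univ ∧
      Tendsto rstar (nhdsWithin rp (Iio rp)) atBot ∧
      Tendsto rstar (nhdsWithin rm (Ioi rm)) atTop := by
  -- the factorization of Δ
  have hl2 : (l:ℝ) ^ 2 ≠ 0 := by positivity
  have key : ∀ r, Δ r = (r - rm) * (r - rp) *
      (r ^ 2 + (rm + rp) * r + (l ^ 2 + (rm + rp) ^ 2 - rm * rp)) / l ^ 2 := by
    intro r
    have hm : rm ^ 4 + l ^ 2 * rm ^ 2 - 2 * M * l ^ 2 * rm + Q ^ 2 * l ^ 2 = 0 := by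
      have h := hΔm
      rw [hΔ] at h
      field_simp at h
      linarith
    have hp : rp ^ 4 + l ^ 2 * rp ^ 2 - 2 * M * l ^ 2 * rp + Q ^ 2 * l ^ 2 = 0 := by
      have h := hΔp
      rw [hΔ] at h
      field_simp at h
      linarith
    have hne : rp - rm ≠ 0 := by linarith
    rw [hΔ]
    have key2 : (rp - rm) * (r ^ 4 + l ^ 2 * r ^ 2 - 2 * M * l ^ 2 * r + Q ^ 2 * l ^ 2) =
        (rp - rm) * ((r - rm) * (r - rp) *
          (r ^ 2 + (rm + rp) * r + (l ^ 2 + (rm + rp) ^ 2 - rm * rp))) := by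
      linear_combination (rp - r) * hm + (r - rm) * hp
    have key3 := mul_left_cancel₀ hne key2
    field_simp
    linear_combination key3
  -- basic sign facts
  have hccpos : 0 < l ^ 2 + (rm + rp) ^ 2 - rm * rp := by
    nlinarith [mul_pos hrm (hrm.trans hmp), sq_nonneg rm, sq_nonneg rp, mul_pos hl hl]
  have hqpos : ∀ r, 0 < r →
      0 < r ^ 2 + (rm + rp) * r + (l ^ 2 + (rm + rp) ^ 2 - rm * rp) := by
    intro r hr
    have : 0 < (rm + rp) * r := mul_pos (by linarith) hr
    nlinarith [sq_nonneg r]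
  have hΔneg : ∀ r ∈ Ioo rm rp, Δ r < 0 := by
    rintro r ⟨h1, h2⟩
    rw [key r]
    apply div_neg_of_neg_of_pos _ (by positivity)
    exact mul_neg_of_neg_of_pos
      (mul_neg_of_pos_of_neg (by linarith) (by linarith)) (hqpos r (by linarith))
  have hΔne : ∀ r ∈ Ioo rm rp, Δ r ≠ 0 := fun r hr => (hΔneg r hr).ne
  -- the uniform derivative bounds
  set E : ℝ := (rp - rm) * (rp ^ 2 + (rm + rp) * rp + (l ^ 2 + (rm + rp) ^ 2 - rm * rp))
    with hE
  have hEpos : 0 < E := mul_pos (by linarith) (hqpos rp (by linarith))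
  set A : ℝ := rm ^ 2 * l ^ 2 / E with hA
  have hApos : 0 < A := by rw [hA]; positivity
  have hub1 : ∀ r ∈ Ioo rm rp, r ^ 2 / Δ r ≤ -(A / (rp - r)) := by
    rintro r ⟨h1, h2⟩
    have hqr := hqpos r (by linarith)
    have hql : r ^ 2 + (rm + rp) * r + (l ^ 2 + (rm + rp) ^ 2 - rm * rp)
        ≤ rp ^ 2 + (rm + rp) * rp + (l ^ 2 + (rm + rp) ^ 2 - rm * rp) := by nlinarith
    have hD : 0 < -Δ r := by linarith [hΔneg r ⟨h1, h2⟩]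
    have hDle : -Δ r ≤ (rp - r) * E / l ^ 2 := by
      rw [key r, ← neg_div]
      gcongr
      · rw [hE]
        have t1 : (r - rm) * (r ^ 2 + (rm + rp) * r + (l ^ 2 + (rm + rp) ^ 2 - rm * rp))
            ≤ (rp - rm) * (rp ^ 2 + (rm + rp) * rp + (l ^ 2 + (rm + rp) ^ 2 - rm * rp)) :=
          mul_le_mul (by linarith) hql hqr.le (by linarith)
        nlinarith [mul_le_mul_of_nonneg_left t1 (show (0:ℝ) ≤ rp - r by linarith)]
    have e1 : r ^ 2 / Δ r = -(r ^ 2 / (-Δ r)) := by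
      rw [div_neg, neg_neg]
    rw [e1, neg_le_neg_iff]
    rw [div_le_div_iff₀ (by linarith : (0:ℝ) < rp - r) hD]
    calc A * (-Δ r)
        ≤ A * ((rp - r) * E / l ^ 2) :=
          mul_le_mul_of_nonneg_left hDle hApos.le
      _ = rm ^ 2 * (rp - r) := by
          rw [hA]
          field_simp
      _ ≤ r ^ 2 * (rp - r) := by
          have : rm ^ 2 ≤ r ^ 2 := by nlinarith
          exact mul_le_mul_of_nonneg_right this (by linarith)
  have hub2 : ∀ r ∈ Ioo rm rp, r ^ 2 / Δ r ≤ -(A / (r - rm)) := by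
    rintro r ⟨h1, h2⟩
    have hqr := hqpos r (by linarith)
    have hql : r ^ 2 + (rm + rp) * r + (l ^ 2 + (rm + rp) ^ 2 - rm * rp)
        ≤ rp ^ 2 + (rm + rp) * rp + (l ^ 2 + (rm + rp) ^ 2 - rm * rp) := by nlinarith
    have hD : 0 < -Δ r := by linarith [hΔneg r ⟨h1, h2⟩]
    have hDle : -Δ r ≤ (r - rm) * E / l ^ 2 := by
      rw [key r, ← neg_div]
      gcongr
      · rw [hE]
        have t1 : (rp - r) * (r ^ 2 + (rm + rp) * r + (l ^ 2 + (rm + rp) ^ 2 - rm * rp))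
            ≤ (rp - rm) * (rp ^ 2 + (rm + rp) * rp + (l ^ 2 + (rm + rp) ^ 2 - rm * rp)) :=
          mul_le_mul (by linarith) hql hqr.le (by linarith)
        nlinarith [mul_le_mul_of_nonneg_left t1 (show (0:ℝ) ≤ r - rm by linarith)]
    have e1 : r ^ 2 / Δ r = -(r ^ 2 / (-Δ r)) := by
      rw [div_neg, neg_neg]
    rw [e1, neg_le_neg_iff]
    rw [div_le_div_iff₀ (by linarith : (0:ℝ) < r - rm) hD]
    calc A * (-Δ r)
        ≤ A * ((r - rm) * E / l ^ 2) :=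
          mul_le_mul_of_nonneg_left hDle hApos.le
      _ = rm ^ 2 * (r - rm) := by
          rw [hA]
          field_simp
      _ ≤ r ^ 2 * (r - rm) := by
          have : rm ^ 2 ≤ r ^ 2 := by nlinarith
          exact mul_le_mul_of_nonneg_right this (by linarith)
  intro rstar hder
  -- analyticity
  have hAnalytic : AnalyticOnNhd ℝ rstar (Ioo rm rp) := by
    intro x hx
    apply analyticAt_of_hasDerivAt_analytic
      (g := fun r => r ^ 2 / Δ r)
    · exact eventually_of_mem (isOpen_Ioo.mem_nhds hx) (fun y hy => hder y hy)
    · have hΔfun : Δ = fun r => r ^ 2 - 2 * M * r + r ^ 4 / l ^ 2 + Q ^ 2 := funext hΔ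
      have hΔa : AnalyticAt ℝ Δ x := by
        rw [hΔfun]
        apply AnalyticAt.add
        apply AnalyticAt.add
        apply AnalyticAt.sub
        · exact (analyticAt_id : AnalyticAt ℝ _ x).pow 2
        · exact analyticAt_const.mul (analyticAt_id : AnalyticAt ℝ _ x)
        · exact ((analyticAt_id : AnalyticAt ℝ _ x).pow 4).div analyticAt_const hl2
        · exact analyticAt_const
      exact ((analyticAt_id : AnalyticAt ℝ _ x).pow 2).div hΔa (hΔne x hx)
  -- strict antitonicity
  have hAnti : StrictAntiOn rstar (Ioo rm rp) := by
    apply strictAntiOn_of_deriv_neg (convex_Ioo rm rp)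
    · exact fun x hx => (hder x hx).differentiableAt.continuousAt.continuousWithinAt
    · intro x hx
      rw [interior_Ioo] at hx
      rw [(hder x hx).deriv]
      exact div_neg_of_pos_of_neg (by nlinarith [hx.1, hrm] : (0:ℝ) < x ^ 2) (hΔneg x hx)
  -- tendsto at rp
  have hBot : Tendsto rstar (nhdsWithin rp (Iio rp)) atBot := by
    set r0 : ℝ := (rm + rp) / 2 with hr0
    have hr0m : rm < r0 := by rw [hr0]; linarith
    have hr0p : r0 < rp := by rw [hr0]; linarith
    set φ : ℝ → ℝ := fun r => rstar r - A * Real.log (rp - r) with hφ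
    have hφderiv : ∀ r ∈ Ioo rm rp, HasDerivAt φ (r ^ 2 / Δ r + A / (rp - r)) r := by
      rintro r ⟨h1, h2⟩
      have hne : rp - r ≠ 0 := by linarith
      have hlog : HasDerivAt (fun r : ℝ => Real.log (rp - r)) ((rp - r)⁻¹ * (-1)) r := by
        have hinner : HasDerivAt (fun r : ℝ => rp - r) (-1) r := by
          simpa using (hasDerivAt_id r).const_sub rp
        exact (Real.hasDerivAt_log hne).comp r hinner
      have := (hder r ⟨h1, h2⟩).sub (hlog.const_mul A)
      refine this.congr_deriv ?_
      ring
    have hmono : AntitoneOn φ (Ico r0 rp) := by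
      apply antitoneOn_of_deriv_nonpos (convex_Ico r0 rp)
      · intro x hx
        have hx' : x ∈ Ioo rm rp := ⟨lt_of_lt_of_le hr0m hx.1, hx.2⟩
        exact (hφderiv x hx').differentiableAt.continuousAt.continuousWithinAt
      · intro x hx
        rw [interior_Ico] at hx
        have hx' : x ∈ Ioo rm rp := ⟨hr0m.trans hx.1, hx.2⟩
        exact (hφderiv x hx').differentiableAt.differentiableWithinAt
      · intro x hx
        rw [interior_Ico] at hx
        have hx' : x ∈ Ioo rm rp := ⟨hr0m.trans hx.1, hx.2⟩
        rw [(hφderiv x hx').deriv]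
        have := hub1 x hx'
        linarith
    have hbound : ∀ r ∈ Ioo r0 rp, rstar r ≤ A * Real.log (rp - r) + φ r0 := by
      rintro r ⟨h1, h2⟩
      have := hmono (left_mem_Ico.mpr hr0p) (mem_Ico.mpr ⟨h1.le, h2⟩) h1.le
      have hφr0 : φ r0 = rstar r0 - A * Real.log (rp - r0) := rfl
      rw [hφ] at this
      simp only at this
      rw [hφr0]
      linarith
    have h1 : Tendsto (fun r => rp - r) (nhdsWithin rp (Iio rp)) (nhdsWithin 0 (Ioi 0)) := by
      apply tendsto_nhdsWithin_of_tendsto_nhds_of_eventually_within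
      · have : Tendsto (fun r : ℝ => rp - r) (nhds rp) (nhds (rp - rp)) :=
          (continuous_const.sub continuous_id).tendsto rp
        simpa using this.mono_left nhdsWithin_le_nhds
      · filter_upwards [self_mem_nhdsWithin] with x hx
        simp only [mem_Iio] at hx
        simp [mem_Ioi]
        linarith
    have h2 : Tendsto (fun r => Real.log (rp - r)) (nhdsWithin rp (Iio rp)) atBot :=
      Real.tendsto_log_nhdsGT_zero.comp h1
    have h3 : Tendsto (fun r => A * Real.log (rp - r) + φ r0) (nhdsWithin rp (Iio rp)) atBot :=
      tendsto_atBot_add_const_right _ _ (h2.const_mul_atBot hApos)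
    apply tendsto_atBot_mono' _ _ h3
    filter_upwards [Ioo_mem_nhdsLT_of_mem (right_mem_Ioc.mpr hr0p)] with r hr
    exact hbound r hr
  -- tendsto at rm
  have hTop : Tendsto rstar (nhdsWithin rm (Ioi rm)) atTop := by
    set r0 : ℝ := (rm + rp) / 2 with hr0
    have hr0m : rm < r0 := by rw [hr0]; linarith
    have hr0p : r0 < rp := by rw [hr0]; linarith
    set ψ : ℝ → ℝ := fun r => rstar r + A * Real.log (r - rm) with hψ
    have hψderiv : ∀ r ∈ Ioo rm rp, HasDerivAt ψ (r ^ 2 / Δ r + A / (r - rm)) r := by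
      rintro r ⟨h1, h2⟩
      have hne : r - rm ≠ 0 := by linarith
      have hlog : HasDerivAt (fun r : ℝ => Real.log (r - rm)) ((r - rm)⁻¹ * 1) r := by
        have hinner : HasDerivAt (fun r : ℝ => r - rm) 1 r := by
          simpa using (hasDerivAt_id r).sub_const rm
        exact (Real.hasDerivAt_log hne).comp r hinner
      have := (hder r ⟨h1, h2⟩).add (hlog.const_mul A)
      refine this.congr_deriv ?_
      ring
    have hmono : AntitoneOn ψ (Ioc rm r0) := by
      apply antitoneOn_of_deriv_nonpos (convex_Ioc rm r0)
      · intro x hx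
        have hx' : x ∈ Ioo rm rp := ⟨hx.1, lt_of_le_of_lt hx.2 hr0p⟩
        exact (hψderiv x hx').differentiableAt.continuousAt.continuousWithinAt
      · intro x hx
        rw [interior_Ioc] at hx
        have hx' : x ∈ Ioo rm rp := ⟨hx.1, hx.2.trans hr0p⟩
        exact (hψderiv x hx').differentiableAt.differentiableWithinAt
      · intro x hx
        rw [interior_Ioc] at hx
        have hx' : x ∈ Ioo rm rp := ⟨hx.1, hx.2.trans hr0p⟩
        rw [(hψderiv x hx').deriv]
        have := hub2 x hx'
        linarith
    have hbound : ∀ r ∈ Ioo rm r0, ψ r0 - A * Real.log (r - rm) ≤ rstar r := by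
      rintro r ⟨h1, h2⟩
      have := hmono (mem_Ioc.mpr ⟨h1, h2.le⟩) (right_mem_Ioc.mpr hr0m) h2.le
      have hψr : ψ r = rstar r + A * Real.log (r - rm) := rfl
      rw [hψr] at this
      linarith
    have h1 : Tendsto (fun r => r - rm) (nhdsWithin rm (Ioi rm)) (nhdsWithin 0 (Ioi 0)) := by
      apply tendsto_nhdsWithin_of_tendsto_nhds_of_eventually_within
      · have : Tendsto (fun r : ℝ => r - rm) (nhds rm) (nhds (rm - rm)) :=
          (continuous_id.sub continuous_const).tendsto rm
        simpa using this.mono_left nhdsWithin_le_nhds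
      · filter_upwards [self_mem_nhdsWithin] with x hx
        simp only [mem_Ioi] at hx
        simp [mem_Ioi]
        linarith
    have h2 : Tendsto (fun r => Real.log (r - rm)) (nhdsWithin rm (Ioi rm)) atBot :=
      Real.tendsto_log_nhdsGT_zero.comp h1
    have h3 : Tendsto (fun r => ψ r0 - A * Real.log (r - rm)) (nhdsWithin rm (Ioi rm)) atTop := by
      apply tendsto_atTop_add_const_left
      have := (h2.const_mul_atBot hApos)
      exact tendsto_neg_atBot_atTop.comp this
    apply tendsto_atTop_mono' _ _ h3
    filter_upwards [Ioo_mem_nhdsGT_of_mem (left_mem_Ico.mpr hr0m)] with r hr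
    have := hbound r hr
    linarith [this]
  -- bijectivity
  have hBij : BijOn rstar (Ioo rm rp) univ := by
    refine ⟨fun x _ => mem_univ _, hAnti.injOn, ?_⟩
    intro y _
    have hmemp : Ioo rm rp ∈ nhdsWithin rp (Iio rp) :=
      inter_mem (mem_nhdsWithin_of_mem_nhds (isOpen_Ioi.mem_nhds hmp)) self_mem_nhdsWithin
    have hea : ∀ᶠ r in nhdsWithin rp (Iio rp), rstar r ≤ y ∧ r ∈ Ioo rm rp :=
      (hBot.eventually (eventually_le_atBot y)).and hmemp
    obtain ⟨a, hay, ha⟩ := hea.exists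
    have hmemm : Ioo rm a ∈ nhdsWithin rm (Ioi rm) :=
      inter_mem self_mem_nhdsWithin (mem_nhdsWithin_of_mem_nhds (isOpen_Iio.mem_nhds ha.1))
    have heb : ∀ᶠ r in nhdsWithin rm (Ioi rm), y ≤ rstar r ∧ r ∈ Ioo rm a :=
      (hTop.eventually (eventually_ge_atTop y)).and hmemm
    obtain ⟨b, hby, hb⟩ := heb.exists
    have hba : b ≤ a := hb.2.le
    have hcont : ContinuousOn rstar (Icc b a) := by
      intro x hx
      have hx' : x ∈ Ioo rm rp := ⟨lt_of_lt_of_le hb.1 hx.1, lt_of_le_of_lt hx.2 ha.2⟩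
      exact (hder x hx').differentiableAt.continuousAt.continuousWithinAt
    have hy : y ∈ Icc (rstar a) (rstar b) := ⟨hay, hby⟩
    obtain ⟨x, hxmem, hxy⟩ := intermediate_value_Icc' hba hcont hy
    exact ⟨x, ⟨lt_of_lt_of_le hb.1 hxmem.1, lt_of_le_of_lt hxmem.2 ha.2⟩, hxy⟩
  exact ⟨hAnalytic, hAnti, hBij, hBot, hTop⟩
end

section
/- Set h(r) := Δ(r)/r² and, for ℓ ∈ ℤ_{≥0}, define the potential V_ℓ(x) := h(r(x))·( h′(r(x))/r(x) + ℓ(ℓ+1)/r(x)² − α/l² ) for x ∈ ℝ, where h′ = dh/dr. Then there exists a constant C > 0, depending only on M, Q, l, α and the chosen normalization of r*, such that for every integer ℓ ≥ 1 and every x ∈ ℝ: |V_ℓ(x)| ≤ C ℓ² e^{−2 min(κ_+, κ_−)|x|}, |V_ℓ′(x)| ≤ C ℓ² e^{−2 min(κ_+, κ_−)|x|}, and |V_ℓ″(x)| ≤ C ℓ² e^{−2 min(κ_+, κ_−)|x|}. -/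
open Set

/-- Generic Grönwall-type decay lemma on `[0, ∞)`. -/
lemma decay_aux (u G : ℝ → ℝ) (κ c L u0 : ℝ) (hc : 0 < c) (hu0 : 0 < u0) (hL : 0 ≤ L)
    (hupos : ∀ x, 0 ≤ x → 0 < u x)
    (hub : u 0 ≤ u0)
    (hderiv : ∀ x, 0 ≤ x → HasDerivAt u (-(u x * G x)) x)
    (hGc : ∀ x, 0 ≤ x → c ≤ G x)
    (hGκ : ∀ x, 0 ≤ x → 2 * κ - G x ≤ L * u x) :
    ∀ x, 0 ≤ x → u x ≤ u0 * Real.exp (L * u0 / c) * Real.exp (-2 * κ * x) := by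
  -- Step 1 : φ = log u + c x is antitone on [0,∞)
  have hlogD : ∀ x, 0 ≤ x → HasDerivAt (fun y => Real.log (u y)) (-(G x)) x := by
    intro x hx
    have := (hderiv x hx).log (ne_of_gt (hupos x hx))
    have hne : u x ≠ 0 := ne_of_gt (hupos x hx)
    have e : -(u x * G x) / u x = -(G x) := by
      field_simp
    rwa [e] at this
  have key : ∀ (f df : ℝ → ℝ), (∀ x, 0 ≤ x → HasDerivAt f (df x) x) →
      (∀ x, 0 ≤ x → df x ≤ 0) → AntitoneOn f (Ici (0:ℝ)) := by
    intro f df hdf hnp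
    apply antitoneOn_of_deriv_nonpos (convex_Ici 0)
    · intro x hx; exact ((hdf x hx).continuousAt).continuousWithinAt
    · intro x hx
      rw [interior_Ici] at hx
      exact ((hdf x (le_of_lt hx)).differentiableAt).differentiableWithinAt
    · intro x hx
      rw [interior_Ici] at hx
      rw [(hdf x (le_of_lt hx)).deriv]
      exact hnp x (le_of_lt hx)
  -- step 1: u x ≤ u0 * exp (-c x)
  have step1 : ∀ x, 0 ≤ x → u x ≤ u0 * Real.exp (-c * x) := by
    have hanti : AntitoneOn (fun y => Real.log (u y) + c * y) (Ici (0:ℝ)) := by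
      apply key _ (fun x => -(G x) + c)
      · intro x hx
        exact (hlogD x hx).add (((hasDerivAt_id x).const_mul c).congr_deriv (by ring))
      · intro x hx
        have := hGc x hx; linarith
    intro x hx
    have h2 := hanti (self_mem_Ici) hx hx
    simp only [mul_zero, add_zero] at h2
    have h3 : Real.log (u x) ≤ Real.log (u 0) - c * x := by linarith
    have h4 : Real.log (u 0) ≤ Real.log u0 := Real.log_le_log (hupos 0 le_rfl) hub
    calc u x = Real.exp (Real.log (u x)) := (Real.exp_log (hupos x hx)).symm
      _ ≤ Real.exp (Real.log u0 + (-c * x)) := by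
          apply Real.exp_le_exp.2; linarith
      _ = u0 * Real.exp (-c * x) := by rw [Real.exp_add, Real.exp_log hu0]
  -- step 2
  have hanti2 : AntitoneOn (fun y => Real.log (u y) + 2 * κ * y + L * u0 / c * Real.exp (-c * y))
      (Ici (0:ℝ)) := by
    apply key _ (fun x => (-(G x) + 2 * κ) + L * u0 / c * (Real.exp (-c * x) * -c))
    · intro x hx
      exact ((hlogD x hx).add (((hasDerivAt_id x).const_mul (2*κ)).congr_deriv (by ring))).add
        ((((hasDerivAt_id x).const_mul (-c)).congr_deriv (mul_one _) |>.exp).const_mul (L * u0 / c))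
    · intro x hx
      have h1 := hGκ x hx
      have h2 := step1 x hx
      have h3 : L * u0 / c * (Real.exp (-c * x) * -c) = -(L * (u0 * Real.exp (-c * x))) := by
        field_simp
      rw [h3]
      have : L * u x ≤ L * (u0 * Real.exp (-c*x)) := mul_le_mul_of_nonneg_left h2 hL
      linarith
  intro x hx
  have h2 := hanti2 (self_mem_Ici) hx hx
  simp only [mul_zero, add_zero, neg_zero, zero_mul, Real.exp_zero, mul_one] at h2
  have h4 : Real.log (u 0) ≤ Real.log u0 := Real.log_le_log (hupos 0 le_rfl) hub
  have h5 : 0 ≤ L * u0 / c * Real.exp (-c * x) := by positivity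
  have h6 : Real.log (u x) ≤ Real.log u0 + L * u0 / c + (-2 * κ * x) := by linarith
  calc u x = Real.exp (Real.log (u x)) := (Real.exp_log (hupos x hx)).symm
    _ ≤ Real.exp (Real.log u0 + L * u0 / c + (-2 * κ * x)) := Real.exp_le_exp.2 h6
    _ = u0 * Real.exp (L * u0 / c) * Real.exp (-2 * κ * x) := by
        rw [Real.exp_add, Real.exp_add, Real.exp_log hu0]


set_option maxHeartbeats 4000000 in
lemma core_decay (M Q l : ℝ) (hl : 0 < l)
    (Δ : ℝ → ℝ) (hΔ : ∀ r, Δ r = r ^ 2 - 2 * M * r + r ^ 4 / l ^ 2 + Q ^ 2)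
    (rm rp : ℝ) (hrm : 0 < rm) (hmp : rm < rp)
    (hΔm : Δ rm = 0) (hΔp : Δ rp = 0)
    (κp κm : ℝ) (hκp : κp = deriv Δ rp / (2 * rp ^ 2)) (hκm : κm = -deriv Δ rm / (2 * rm ^ 2))
    (hκp_pos : 0 < κp) (hκm_pos : 0 < κm)
    (rstar : ℝ → ℝ) (hrstar : ∀ r ∈ Ioo rm rp, HasDerivAt rstar (r ^ 2 / Δ r) r)
    (rfun : ℝ → ℝ) (hrfun_mem : ∀ x : ℝ, rfun x ∈ Ioo rm rp)
    (hrfun_inv : ∀ x : ℝ, rstar (rfun x) = x)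
    (hrfun_inv' : ∀ r ∈ Ioo rm rp, rfun (rstar r) = r)
    (h : ℝ → ℝ) (hh : ∀ r, h r = Δ r / r ^ 2) :
    ∃ C0 > 0, (∀ x : ℝ, HasDerivAt rfun (h (rfun x)) x) ∧
      ∀ x : ℝ, |h (rfun x)| ≤ C0 * Real.exp (-2 * min κp κm * |x|) := by
  have hl2 : (0:ℝ) < l^2 := by positivity
  have hrp : (0:ℝ) < rp := lt_trans hrm hmp
  have hne : rp - rm ≠ 0 := by linarith
  have hΔfun : Δ = fun r => r ^ 2 - 2 * M * r + r ^ 4 / l ^ 2 + Q ^ 2 := funext hΔ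
  have e1 : rm^4 + l^2*rm^2 - 2*M*l^2*rm + Q^2*l^2 = 0 := by
    have := hΔm; rw [hΔ] at this
    field_simp at this; linarith
  have e2 : rp^4 + l^2*rp^2 - 2*M*l^2*rp + Q^2*l^2 = 0 := by
    have := hΔp; rw [hΔ] at this
    field_simp at this; linarith
  -- sum of roots relation
  have hA : (rp+rm)*(rp^2+rm^2) + l^2*(rp+rm) - 2*M*l^2 = 0 := by
    have key : (rp - rm) * ((rp+rm)*(rp^2+rm^2) + l^2*(rp+rm) - 2*M*l^2) = 0 := by
      linear_combination e2 - e1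
    exact (mul_eq_zero.1 key).resolve_left hne
  -- the quadratic factor
  obtain ⟨P, hP⟩ : ∃ P : ℝ → ℝ, ∀ r, P r = r^2 + (rm+rp)*r + (rm^2+rm*rp+rp^2+l^2) :=
    ⟨_, fun r => rfl⟩
  have hPpos : ∀ r, 0 ≤ r → 0 < P r := by
    intro r hr; rw [hP]; nlinarith
  have hB : rm * rp * (rm^2+rm*rp+rp^2+l^2) = Q^2*l^2 := by
    linear_combination rm * hA - e1
  have hΔ' : ∀ r, l^2 * Δ r = r^4 + l^2*r^2 - 2*M*l^2*r + Q^2*l^2 := by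
    intro r; rw [hΔ]; field_simp; ring
  have hfac : ∀ r, Δ r = (r - rm) * (r - rp) * P r / l^2 := by
    intro r
    rw [eq_div_iff hl2.ne', hP]
    linear_combination hΔ' r + r*hA - hB
  have hΔneg : ∀ r, r ∈ Ioo rm rp → Δ r < 0 := by
    intro r hr
    rw [hfac r]
    apply div_neg_of_neg_of_pos _ hl2
    have hPr := hPpos r (by nlinarith [hr.1])
    nlinarith [hr.1, hr.2, mul_pos (sub_pos.2 hr.1) hPr]
  -- derivative of Δ
  have hΔd : ∀ r : ℝ, HasDerivAt Δ (2*r - 2*M + 4*r^3/l^2) r := by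
    intro r
    rw [hΔfun]
    have p2 : HasDerivAt (fun y:ℝ => y^2) (2*r) r := by simpa using hasDerivAt_pow 2 r
    have p4 : HasDerivAt (fun y:ℝ => y^4) (4*r^3) r := by simpa using hasDerivAt_pow 4 r
    have plin : HasDerivAt (fun y:ℝ => 2*M*y) (2*M) r := by
      simpa using (hasDerivAt_id r).const_mul (2*M)
    exact ((p2.sub plin).add (p4.div_const (l^2))).add_const (Q^2)
  have hDm : deriv Δ rm = -((rp - rm) * P rm) / l^2 := by
    rw [(hΔd rm).deriv, hP]
    field_simp
    linear_combination hA
  have hDp : deriv Δ rp = (rp - rm) * P rp / l^2 := by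
    rw [(hΔd rp).deriv, hP]
    field_simp
    linear_combination hA
  have hκm_eq : 2*κm = (rp - rm) * P rm / (l^2 * rm^2) := by
    rw [hκm, hDm]; field_simp
  have hκp_eq : 2*κp = (rp - rm) * P rp / (l^2 * rp^2) := by
    rw [hκp, hDp]; field_simp
  -- rstar is strictly antitone on the interval
  have hrs_anti : StrictAntiOn rstar (Ioo rm rp) := by
    apply strictAntiOn_of_deriv_neg (convex_Ioo rm rp)
    · intro r hr; exact ((hrstar r hr).continuousAt).continuousWithinAt
    · intro r hr
      rw [interior_Ioo] at hr
      rw [(hrstar r hr).deriv]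
      apply div_neg_of_pos_of_neg
      · have : 0 < r := lt_trans hrm hr.1
        positivity
      · exact hΔneg r hr
  -- rfun is antitone
  have hrfun_anti : ∀ x y : ℝ, x ≤ y → rfun y ≤ rfun x := by
    intro x y hxy
    by_contra hcon
    push_neg at hcon
    have := hrs_anti (hrfun_mem x) (hrfun_mem y) hcon
    rw [hrfun_inv, hrfun_inv] at this
    linarith
  -- rfun is continuous
  have hrfun_cont : ∀ x : ℝ, ContinuousAt rfun x := by
    intro x
    rw [Metric.continuousAt_iff]
    intro ε hε
    set r0 := rfun x with hr0
    have hmem := hrfun_mem x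
    set ε' := min (ε/2) (min ((r0 - rm)/2) ((rp - r0)/2)) with hε'
    have hε'pos : 0 < ε' := by
      apply lt_min (by linarith)
      apply lt_min
      · have := hmem.1; linarith
      · have := hmem.2; linarith
    have hup : r0 + ε' ∈ Ioo rm rp := by
      constructor
      · have := hmem.1; linarith
      · have h1 : ε' ≤ (rp - r0)/2 := le_trans (min_le_right _ _) (min_le_right _ _)
        have := hmem.2; linarith
    have hdn : r0 - ε' ∈ Ioo rm rp := by
      constructor
      · have h1 : ε' ≤ (r0 - rm)/2 := le_trans (min_le_right _ _) (min_le_left _ _)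
        have := hmem.1; linarith
      · have := hmem.2; linarith
    have ha : rstar (r0 + ε') < x := by
      have := hrs_anti hmem hup (by linarith)
      rwa [hrfun_inv] at this
    have hb : x < rstar (r0 - ε') := by
      have := hrs_anti hdn hmem (by linarith)
      rwa [hrfun_inv] at this
    refine ⟨min (x - rstar (r0 + ε')) (rstar (r0 - ε') - x), lt_min (by linarith) (by linarith), ?_⟩
    intro y hy
    rw [Real.dist_eq] at hy
    have hy1 : rstar (r0 + ε') < y := by
      have := abs_lt.1 hy
      have := this.1
      have h2 : min (x - rstar (r0 + ε')) (rstar (r0 - ε') - x) ≤ x - rstar (r0 + ε') :=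
        min_le_left _ _
      linarith
    have hy2 : y < rstar (r0 - ε') := by
      have := (abs_lt.1 hy).2
      have h2 : min (x - rstar (r0 + ε')) (rstar (r0 - ε') - x) ≤ rstar (r0 - ε') - x :=
        min_le_right _ _
      linarith
    have k1 : rfun y ≤ rfun (rstar (r0 + ε')) := hrfun_anti _ _ (le_of_lt hy1)
    have k2 : rfun (rstar (r0 - ε')) ≤ rfun y := hrfun_anti _ _ (le_of_lt hy2)
    rw [hrfun_inv' _ hup] at k1
    rw [hrfun_inv' _ hdn] at k2
    rw [Real.dist_eq, abs_lt]
    have hεε : ε' ≤ ε/2 := min_le_left _ _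
    constructor <;> linarith
  -- derivative of rfun
  have hrfun_pos : ∀ x : ℝ, 0 < rfun x := fun x => lt_trans hrm (hrfun_mem x).1
  have hrfun_ne : ∀ x : ℝ, rfun x ≠ 0 := fun x => (hrfun_pos x).ne'
  have hΔr_neg : ∀ x : ℝ, Δ (rfun x) < 0 := fun x => hΔneg _ (hrfun_mem x)
  have hrfun_deriv : ∀ x : ℝ, HasDerivAt rfun (h (rfun x)) x := by
    intro x
    have key := HasDerivAt.of_local_left_inverse (hrfun_cont x)
      (hrstar (rfun x) (hrfun_mem x))
      (by
        apply div_ne_zero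
        · exact pow_ne_zero 2 (hrfun_ne x)
        · exact (hΔr_neg x).ne)
      (Filter.Eventually.of_forall hrfun_inv)
    have : ((rfun x) ^ 2 / Δ (rfun x))⁻¹ = h (rfun x) := by
      rw [hh, inv_div]
    rwa [this] at key
  have hPfun : P = fun r => r^2 + (rm+rp)*r + (rm^2+rm*rp+rp^2+l^2) := funext hP
  have contP : Continuous P := by rw [hPfun]; fun_prop
  have dP : ∀ r : ℝ, HasDerivAt P (2*r + (rm+rp)) r := by
    intro r
    rw [hPfun]
    have p2 : HasDerivAt (fun y:ℝ => y^2) (2*r) r := by simpa using hasDerivAt_pow 2 r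
    have plin : HasDerivAt (fun y:ℝ => (rm+rp)*y) (rm+rp) r := by
      simpa using (hasDerivAt_id r).const_mul (rm+rp)
    exact (p2.add plin).add_const _
  obtain ⟨F1, hF1⟩ : ∃ F : ℝ → ℝ, ∀ r, F r = (rp - r) * P r / (l^2 * r^2) := ⟨_, fun r => rfl⟩
  obtain ⟨F2, hF2⟩ : ∃ F : ℝ → ℝ, ∀ r, F r = (r - rm) * P r / (l^2 * r^2) := ⟨_, fun r => rfl⟩
  have hF1fun : F1 = fun r => (rp - r) * P r / (l^2 * r^2) := funext hF1
  have hF2fun : F2 = fun r => (r - rm) * P r / (l^2 * r^2) := funext hF2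
  have hhF1 : ∀ r : ℝ, r ≠ 0 → h r = -((r - rm) * F1 r) := by
    intro r hr
    rw [hh, hfac, hF1]
    field_simp
    ring
  have hhF2 : ∀ r : ℝ, r ≠ 0 → h r = -((rp - r) * F2 r) := by
    intro r hr
    rw [hh, hfac, hF2]
    field_simp
    ring
  have hF1κ : F1 rm = 2*κm := (hF1 rm).trans hκm_eq.symm
  have hF2κ : F2 rp = 2*κp := (hF2 rp).trans hκp_eq.symm
  -- derivatives of F1 F2
  have hden : ∀ r : ℝ, HasDerivAt (fun y:ℝ => l^2 * y^2) (l^2*(2*r)) r := by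
    intro r
    have p2 : HasDerivAt (fun y:ℝ => y^2) (2*r) r := by simpa using hasDerivAt_pow 2 r
    exact p2.const_mul (l^2)
  have hdenne : ∀ r : ℝ, r ≠ 0 → l^2 * r^2 ≠ 0 := by
    intro r hr; positivity
  obtain ⟨F1d, hF1d⟩ : ∃ F : ℝ → ℝ, ∀ r, F r =
      (((0-1) * P r + (rp - r)*(2*r + (rm+rp))) * (l^2*r^2) - (rp - r)*P r * (l^2*(2*r)))/(l^2*r^2)^2 :=
    ⟨_, fun r => rfl⟩
  obtain ⟨F2d, hF2d⟩ : ∃ F : ℝ → ℝ, ∀ r, F r =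
      (((1-0) * P r + (r - rm)*(2*r + (rm+rp))) * (l^2*r^2) - (r - rm)*P r * (l^2*(2*r)))/(l^2*r^2)^2 :=
    ⟨_, fun r => rfl⟩
  have dF1 : ∀ r : ℝ, r ≠ 0 → HasDerivAt F1 (F1d r) r := by
    intro r hr
    have num : HasDerivAt (fun y:ℝ => (rp - y) * P y) ((0-1) * P r + (rp - r)*(2*r + (rm+rp))) r :=
      ((hasDerivAt_const r rp).sub (hasDerivAt_id r)).mul (dP r)
    have := num.div (hden r) (hdenne r hr)
    rw [hF1fun]
    refine this.congr_deriv ?_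
    rw [hF1d]
  have dF2 : ∀ r : ℝ, r ≠ 0 → HasDerivAt F2 (F2d r) r := by
    intro r hr
    have num : HasDerivAt (fun y:ℝ => (y - rm) * P y) ((1-0) * P r + (r - rm)*(2*r + (rm+rp))) r :=
      ((hasDerivAt_id r).sub (hasDerivAt_const r rm)).mul (dP r)
    have := num.div (hden r) (hdenne r hr)
    rw [hF2fun]
    refine this.congr_deriv ?_
    rw [hF2d]
  -- Lipschitz bounds
  have hposIcc : ∀ r : ℝ, r ∈ Icc rm rp → r ≠ 0 := fun r hr => by
    have := hr.1; intro hc; rw [hc] at this; linarith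
  have contF1d : ContinuousOn F1d (Icc rm rp) := by
    have hfd : F1d = fun r => (((0-1) * P r + (rp - r)*(2*r + (rm+rp))) * (l^2*r^2)
        - (rp - r)*P r * (l^2*(2*r)))/(l^2*r^2)^2 := funext hF1d
    rw [hfd]
    apply ContinuousOn.div (by fun_prop) (by fun_prop)
    intro r hr
    have := hposIcc r hr
    positivity
  have contF2d : ContinuousOn F2d (Icc rm rp) := by
    have hfd : F2d = fun r => (((1-0) * P r + (r - rm)*(2*r + (rm+rp))) * (l^2*r^2)
        - (r - rm)*P r * (l^2*(2*r)))/(l^2*r^2)^2 := funext hF2d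
    rw [hfd]
    apply ContinuousOn.div (by fun_prop) (by fun_prop)
    intro r hr
    have := hposIcc r hr
    positivity
  obtain ⟨L1, hL1⟩ := (isCompact_Icc (a := rm) (b := rp)).exists_bound_of_continuousOn contF1d
  obtain ⟨L2, hL2⟩ := (isCompact_Icc (a := rm) (b := rp)).exists_bound_of_continuousOn contF2d
  have hlip1 : ∀ r ∈ Icc rm rp, |F1 r - F1 rm| ≤ L1 * |r - rm| := by
    intro r hr
    exact (convex_Icc rm rp).norm_image_sub_le_of_norm_hasDerivWithin_le
      (fun y hy => (dF1 y (hposIcc y hy)).hasDerivWithinAt) hL1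
      (left_mem_Icc.2 (le_of_lt hmp)) hr
  have hlip2 : ∀ r ∈ Icc rm rp, |F2 r - F2 rp| ≤ L2 * |r - rp| := by
    intro r hr
    exact (convex_Icc rm rp).norm_image_sub_le_of_norm_hasDerivWithin_le
      (fun y hy => (dF2 y (hposIcc y hy)).hasDerivWithinAt) hL2
      (right_mem_Icc.2 (le_of_lt hmp)) hr
  -- minima of F1 on [rm, rfun 0] and of F2 on [rfun 0, rp]
  have hmem0 := hrfun_mem 0
  have contF1 : ContinuousOn F1 (Icc rm (rfun 0)) := by
    intro r hr
    have hrne : r ≠ 0 := by have := hr.1; intro hc; rw [hc] at this; linarith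
    exact (dF1 r hrne).continuousAt.continuousWithinAt
  have contF2 : ContinuousOn F2 (Icc (rfun 0) rp) := by
    intro r hr
    have hrne : r ≠ 0 := by
      have h1 := hr.1; have h2 := hmem0.1; intro hc; rw [hc] at h1; linarith
    exact (dF2 r hrne).continuousAt.continuousWithinAt
  obtain ⟨rb1, hrb1mem, hrb1min⟩ := (isCompact_Icc (a := rm) (b := rfun 0)).exists_isMinOn
    ⟨rm, left_mem_Icc.2 (le_of_lt hmem0.1)⟩ contF1
  obtain ⟨rb2, hrb2mem, hrb2min⟩ := (isCompact_Icc (a := rfun 0) (b := rp)).exists_isMinOn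
    ⟨rp, right_mem_Icc.2 (le_of_lt hmem0.2)⟩ contF2
  have hc1pos : 0 < F1 rb1 := by
    rw [hF1]
    have h1 : 0 < rb1 := by have := hrb1mem.1; linarith
    have h2 : rb1 < rp := by have := hrb1mem.2; have := hmem0.2; linarith
    exact div_pos (mul_pos (by linarith) (hPpos rb1 (le_of_lt h1))) (by positivity)
  have hc2pos : 0 < F2 rb2 := by
    rw [hF2]
    have h1 : 0 < rb2 := by have := hrb2mem.1; have := hmem0.1; linarith
    have h2 : rm < rb2 := by have := hrb2mem.1; have := hmem0.1; linarith
    exact div_pos (mul_pos (by linarith) (hPpos rb2 (le_of_lt h1))) (by positivity)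
  -- decay on the right
  have hdecayR : ∀ x, 0 ≤ x → rfun x - rm ≤
      (rp - rm) * Real.exp (max L1 0 * (rp - rm) / F1 rb1) * Real.exp (-2*κm*x) := by
    apply decay_aux _ (fun x => F1 (rfun x)) κm (F1 rb1) (max L1 0) (rp - rm) hc1pos
      (by linarith) (le_max_right _ _)
    · intro x _; have := (hrfun_mem x).1; simp only [sub_pos]; linarith
    · show rfun 0 - rm ≤ rp - rm
      linarith [hmem0.2]
    · intro x _
      have hd := (hrfun_deriv x).sub_const rm
      rwa [hhF1 _ (hrfun_ne x)] at hd
    · intro x hx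
      have hmemx : rfun x ∈ Icc rm (rfun 0) := ⟨le_of_lt (hrfun_mem x).1, hrfun_anti 0 x hx⟩
      exact isMinOn_iff.1 hrb1min _ hmemx
    · intro x hx
      have hrx : rfun x ∈ Icc rm rp := ⟨le_of_lt (hrfun_mem x).1, le_of_lt (hrfun_mem x).2⟩
      have hl := hlip1 _ hrx
      have h1 : F1 rm - F1 (rfun x) ≤ |F1 (rfun x) - F1 rm| := by
        rw [abs_sub_comm]; exact le_abs_self _
      have h2 : |rfun x - rm| = rfun x - rm := abs_of_nonneg (by linarith [(hrfun_mem x).1])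
      have h3 : L1 * (rfun x - rm) ≤ max L1 0 * (rfun x - rm) :=
        mul_le_mul_of_nonneg_right (le_max_left _ _) (by linarith [(hrfun_mem x).1])
      rw [h2] at hl
      rw [← hF1κ]
      linarith
  -- decay on the left
  have hdecayL : ∀ x, 0 ≤ x → rp - rfun (-x) ≤
      (rp - rm) * Real.exp (max L2 0 * (rp - rm) / F2 rb2) * Real.exp (-2*κp*x) := by
    apply decay_aux _ (fun x => F2 (rfun (-x))) κp (F2 rb2) (max L2 0) (rp - rm) hc2pos
      (by linarith) (le_max_right _ _)
    · intro x _; have := (hrfun_mem (-x)).2; simp only [sub_pos]; linarith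
    · show rp - rfun (-0) ≤ rp - rm
      rw [neg_zero]; linarith [hmem0.1]
    · intro x _
      have hcomp : HasDerivAt (fun y : ℝ => rfun (-y)) (h (rfun (-x)) * (-1)) x :=
        (hrfun_deriv (-x)).comp x (hasDerivAt_neg x)
      have hd := hcomp.const_sub rp
      have e : -(h (rfun (-x)) * (-1)) = -((rp - rfun (-x)) * F2 (rfun (-x))) := by
        rw [hhF2 _ (hrfun_ne _)]; ring
      rwa [e] at hd
    · intro x hx
      have hmemx : rfun (-x) ∈ Icc (rfun 0) rp :=
        ⟨hrfun_anti (-x) 0 (by linarith), le_of_lt (hrfun_mem (-x)).2⟩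
      exact isMinOn_iff.1 hrb2min _ hmemx
    · intro x hx
      have hrx : rfun (-x) ∈ Icc rm rp :=
        ⟨le_of_lt (hrfun_mem (-x)).1, le_of_lt (hrfun_mem (-x)).2⟩
      have hl := hlip2 _ hrx
      have h1 : F2 rp - F2 (rfun (-x)) ≤ |F2 (rfun (-x)) - F2 rp| := by
        rw [abs_sub_comm]; exact le_abs_self _
      have h2 : |rfun (-x) - rp| = rp - rfun (-x) := by
        rw [abs_sub_comm]; exact abs_of_nonneg (by linarith [(hrfun_mem (-x)).2])
      have h3 : L2 * (rp - rfun (-x)) ≤ max L2 0 * (rp - rfun (-x)) :=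
        mul_le_mul_of_nonneg_right (le_max_left _ _) (by linarith [(hrfun_mem (-x)).2])
      rw [h2] at hl
      rw [← hF2κ]
      linarith
  -- uniform bound KK with |h r| ≤ KK*(r-rm) and KK*(rp-r)
  obtain ⟨KK, hKK⟩ : ∃ KK : ℝ, KK = (rp - rm) * P rp / (l^2 * rm^2) := ⟨_, rfl⟩
  have hKKpos : 0 < KK := by
    rw [hKK]; exact div_pos (mul_pos (by linarith) (hPpos rp (le_of_lt hrp))) (by positivity)
  have hPmono : ∀ r ∈ Icc rm rp, P r ≤ P rp := by
    intro r hr; rw [hP, hP]; nlinarith [hr.1, hr.2]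
  have hsq : ∀ r ∈ Icc rm rp, l^2*rm^2 ≤ l^2*r^2 := by
    intro r hr
    have : rm^2 ≤ r^2 := by nlinarith [hr.1, hrm]
    exact mul_le_mul_of_nonneg_left this (le_of_lt hl2)
  have hF1bd : ∀ r ∈ Icc rm rp, F1 r ≤ KK := by
    intro r hr
    rw [hF1, hKK]
    have h0 : 0 < r := lt_of_lt_of_le hrm hr.1
    apply div_le_div₀ (le_of_lt (mul_pos (by linarith) (hPpos rp (le_of_lt hrp))))
      (mul_le_mul (by linarith [hr.1]) (hPmono r hr) (le_of_lt (hPpos r (le_of_lt h0)))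
        (by linarith)) (by positivity) (hsq r hr)
  have hF2bd : ∀ r ∈ Icc rm rp, F2 r ≤ KK := by
    intro r hr
    rw [hF2, hKK]
    have h0 : 0 < r := lt_of_lt_of_le hrm hr.1
    apply div_le_div₀ (le_of_lt (mul_pos (by linarith) (hPpos rp (le_of_lt hrp))))
      (mul_le_mul (by linarith [hr.2]) (hPmono r hr) (le_of_lt (hPpos r (le_of_lt h0)))
        (by linarith)) (by positivity) (hsq r hr)
  have hrIcc : ∀ x : ℝ, rfun x ∈ Icc rm rp :=
    fun x => ⟨le_of_lt (hrfun_mem x).1, le_of_lt (hrfun_mem x).2⟩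
  have hF1nn : ∀ x : ℝ, 0 ≤ F1 (rfun x) := by
    intro x
    rw [hF1]
    apply div_nonneg _ (by positivity)
    exact mul_nonneg (by linarith [(hrfun_mem x).2]) (le_of_lt (hPpos _ (le_of_lt (hrfun_pos x))))
  have hF2nn : ∀ x : ℝ, 0 ≤ F2 (rfun x) := by
    intro x
    rw [hF2]
    apply div_nonneg _ (by positivity)
    exact mul_nonneg (by linarith [(hrfun_mem x).1]) (le_of_lt (hPpos _ (le_of_lt (hrfun_pos x))))
  have habs1 : ∀ x : ℝ, |h (rfun x)| ≤ KK * (rfun x - rm) := by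
    intro x
    rw [hhF1 _ (hrfun_ne x), abs_neg,
      abs_of_nonneg (mul_nonneg (by linarith [(hrfun_mem x).1]) (hF1nn x))]
    nlinarith [hF1bd _ (hrIcc x), (hrfun_mem x).1, hF1nn x, hKKpos]
  have habs2 : ∀ x : ℝ, |h (rfun x)| ≤ KK * (rp - rfun x) := by
    intro x
    have e : h (rfun x) = -((rp - rfun x) * F2 (rfun x)) := hhF2 _ (hrfun_ne x)
    rw [e, abs_neg,
      abs_of_nonneg (mul_nonneg (by linarith [(hrfun_mem x).2]) (hF2nn x))]
    nlinarith [hF2bd _ (hrIcc x), (hrfun_mem x).2, hF2nn x, hKKpos]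
  obtain ⟨Cm, hCm⟩ : ∃ C : ℝ, C = (rp - rm) * Real.exp (max L1 0 * (rp - rm) / F1 rb1) := ⟨_, rfl⟩
  obtain ⟨Cp, hCp⟩ : ∃ C : ℝ, C = (rp - rm) * Real.exp (max L2 0 * (rp - rm) / F2 rb2) := ⟨_, rfl⟩
  have hCmpos : 0 < Cm := by rw [hCm]; exact mul_pos (by linarith) (Real.exp_pos _)
  have hCppos : 0 < Cp := by rw [hCp]; exact mul_pos (by linarith) (Real.exp_pos _)
  have Hdecay : ∀ x : ℝ, |h (rfun x)| ≤ (KK*Cm + KK*Cp) * Real.exp (-2 * min κp κm * |x|) := by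
    intro x
    have hEpos : (0:ℝ) < Real.exp (-2 * min κp κm * |x|) := Real.exp_pos _
    rcases le_total 0 x with hx | hx
    · have hd := hdecayR x hx
      rw [← hCm] at hd
      have e1 : Real.exp (-2*κm*x) ≤ Real.exp (-2 * min κp κm * |x|) := by
        apply Real.exp_le_exp.2
        have hmin : min κp κm ≤ κm := min_le_right _ _
        rw [abs_of_nonneg hx]; nlinarith
      calc |h (rfun x)| ≤ KK * (rfun x - rm) := habs1 x
        _ ≤ KK * (Cm * Real.exp (-2*κm*x)) :=
            mul_le_mul_of_nonneg_left hd (le_of_lt hKKpos)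
        _ ≤ KK * (Cm * Real.exp (-2 * min κp κm * |x|)) :=
            mul_le_mul_of_nonneg_left
              (mul_le_mul_of_nonneg_left e1 (le_of_lt hCmpos)) (le_of_lt hKKpos)
        _ ≤ (KK*Cm + KK*Cp) * Real.exp (-2 * min κp κm * |x|) := by
            nlinarith [mul_pos (mul_pos hKKpos hCppos) hEpos]
    · have hd := hdecayL (-x) (by linarith)
      rw [neg_neg, ← hCp] at hd
      have e1 : Real.exp (-2*κp*(-x)) ≤ Real.exp (-2 * min κp κm * |x|) := by
        apply Real.exp_le_exp.2
        have hmin : min κp κm ≤ κp := min_le_left _ _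
        rw [abs_of_nonpos hx]; nlinarith
      calc |h (rfun x)| ≤ KK * (rp - rfun x) := habs2 x
        _ ≤ KK * (Cp * Real.exp (-2*κp*(-x))) :=
            mul_le_mul_of_nonneg_left hd (le_of_lt hKKpos)
        _ ≤ KK * (Cp * Real.exp (-2 * min κp κm * |x|)) :=
            mul_le_mul_of_nonneg_left
              (mul_le_mul_of_nonneg_left e1 (le_of_lt hCppos)) (le_of_lt hKKpos)
        _ ≤ (KK*Cm + KK*Cp) * Real.exp (-2 * min κp κm * |x|) := by
            nlinarith [mul_pos (mul_pos hKKpos hCmpos) hEpos]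
  exact ⟨KK*Cm + KK*Cp, by nlinarith, hrfun_deriv, Hdecay⟩


set_option maxHeartbeats 2000000 in
theorem stage5 (M Q l α : ℝ) (hM : 0 < M) (hQ : Q ≠ 0) (hl : 0 < l) (hα : α < 9 / 4)
    (Δ : ℝ → ℝ) (hΔ : ∀ r, Δ r = r ^ 2 - 2 * M * r + r ^ 4 / l ^ 2 + Q ^ 2)
    (rm rp : ℝ) (hrm : 0 < rm) (hmp : rm < rp)
    (κp κm : ℝ)
    (rfun : ℝ → ℝ) (hrfun_mem : ∀ x : ℝ, rfun x ∈ Ioo rm rp)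
    (h : ℝ → ℝ) (hh : ∀ r, h r = Δ r / r ^ 2)
    (C0 : ℝ) (hC0pos : 0 < C0)
    (hrd : ∀ x : ℝ, HasDerivAt rfun (h (rfun x)) x)
    (hC0 : ∀ x : ℝ, |h (rfun x)| ≤ C0 * Real.exp (-2 * min κp κm * |x|))
    (V : ℕ → ℝ → ℝ)
    (hV : ∀ (ℓ : ℕ) (x : ℝ), V ℓ x =
      h (rfun x) * (deriv h (rfun x) / rfun x + (ℓ : ℝ) * ((ℓ : ℝ) + 1) / (rfun x) ^ 2 - α / l ^ 2)) :
    ∃ C > 0, ∀ ℓ : ℕ, 1 ≤ ℓ → ∀ x : ℝ,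
      |V ℓ x| ≤ C * (ℓ : ℝ) ^ 2 * Real.exp (-2 * min κp κm * |x|) ∧
      |deriv (V ℓ) x| ≤ C * (ℓ : ℝ) ^ 2 * Real.exp (-2 * min κp κm * |x|) ∧
      |deriv (deriv (V ℓ)) x| ≤ C * (ℓ : ℝ) ^ 2 * Real.exp (-2 * min κp κm * |x|) := by
  have hl2 : (0:ℝ) < l^2 := by positivity
  have hrp : (0:ℝ) < rp := lt_trans hrm hmp
  have hrfun_pos : ∀ x : ℝ, 0 < rfun x := fun x => lt_trans hrm (hrfun_mem x).1
  have hrfun_ne : ∀ x : ℝ, rfun x ≠ 0 := fun x => (hrfun_pos x).ne'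
  have hrIcc : ∀ x : ℝ, rfun x ∈ Icc rm rp :=
    fun x => ⟨le_of_lt (hrfun_mem x).1, le_of_lt (hrfun_mem x).2⟩
  have hposIcc : ∀ r ∈ Icc rm rp, r ≠ 0 := fun r hr => by
    have := hr.1; intro hc; rw [hc] at this; linarith
  -- explicit form of h and its derivatives
  have hhfun : h = fun r => (r^2 - 2*M*r + r^4/l^2 + Q^2)/r^2 :=
    funext (fun r => by rw [hh, hΔ])
  obtain ⟨h1f, hh1f⟩ : ∃ f : ℝ → ℝ, ∀ r, f r = 2*M/r^2 + 2*r/l^2 - 2*Q^2/r^3 := ⟨_, fun _ => rfl⟩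
  obtain ⟨h2f, hh2f⟩ : ∃ f : ℝ → ℝ, ∀ r, f r = -4*M/r^3 + 2/l^2 + 6*Q^2/r^4 := ⟨_, fun _ => rfl⟩
  obtain ⟨h3f, hh3f⟩ : ∃ f : ℝ → ℝ, ∀ r, f r = 12*M/r^4 - 24*Q^2/r^5 := ⟨_, fun _ => rfl⟩
  have p2 : ∀ r : ℝ, HasDerivAt (fun y:ℝ => y^2) (2*r) r := fun r => by
    simpa using hasDerivAt_pow 2 r
  have p3 : ∀ r : ℝ, HasDerivAt (fun y:ℝ => y^3) (3*r^2) r := fun r => by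
    simpa using hasDerivAt_pow 3 r
  have p4 : ∀ r : ℝ, HasDerivAt (fun y:ℝ => y^4) (4*r^3) r := fun r => by
    simpa using hasDerivAt_pow 4 r
  have p5 : ∀ r : ℝ, HasDerivAt (fun y:ℝ => y^5) (5*r^4) r := fun r => by
    simpa using hasDerivAt_pow 5 r
  have dh : ∀ r : ℝ, r ≠ 0 → HasDerivAt h (h1f r) r := by
    intro r hr
    rw [hhfun]
    have plin : HasDerivAt (fun y:ℝ => 2*M*y) (2*M) r := by
      simpa using (hasDerivAt_id r).const_mul (2*M)
    have num : HasDerivAt (fun y:ℝ => y^2 - 2*M*y + y^4/l^2 + Q^2)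
        (2*r - 2*M + 4*r^3/l^2) r :=
      (((p2 r).sub plin).add ((p4 r).div_const (l^2))).add_const (Q^2)
    have key := num.div (p2 r) (pow_ne_zero 2 hr)
    refine key.congr_deriv ?_
    rw [hh1f]
    field_simp
    ring
  have dh1 : ∀ r : ℝ, r ≠ 0 → HasDerivAt h1f (h2f r) r := by
    intro r hr
    have hfn : h1f = fun r => 2*M/r^2 + 2*r/l^2 - 2*Q^2/r^3 := funext hh1f
    rw [hfn]
    have t1 := (hasDerivAt_const r (2*M)).div (p2 r) (pow_ne_zero 2 hr)
    have t2 : HasDerivAt (fun y:ℝ => 2*y/l^2) (2/l^2) r := by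
      simpa using ((hasDerivAt_id r).const_mul 2).div_const (l^2)
    have t3 := (hasDerivAt_const r (2*Q^2)).div (p3 r) (pow_ne_zero 3 hr)
    have key := (t1.add t2).sub t3
    refine key.congr_deriv ?_
    rw [hh2f]
    field_simp
    ring
  have dh2 : ∀ r : ℝ, r ≠ 0 → HasDerivAt h2f (h3f r) r := by
    intro r hr
    have hfn : h2f = fun r => -4*M/r^3 + 2/l^2 + 6*Q^2/r^4 := funext hh2f
    rw [hfn]
    have t1 := (hasDerivAt_const r (-4*M)).div (p3 r) (pow_ne_zero 3 hr)
    have t3 := (hasDerivAt_const r (6*Q^2)).div (p4 r) (pow_ne_zero 4 hr)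
    have key := (t1.add_const (2/l^2)).add t3
    refine key.congr_deriv ?_
    rw [hh3f]
    field_simp
    ring
  have conth3 : ContinuousOn h3f (Icc rm rp) := by
    have hfn : h3f = fun r => 12*M/r^4 - 24*Q^2/r^5 := funext hh3f
    rw [hfn]
    apply ContinuousOn.sub
    · exact ContinuousOn.div continuousOn_const (by fun_prop)
        (fun r hr => pow_ne_zero 4 (hposIcc r hr))
    · exact ContinuousOn.div continuousOn_const (by fun_prop)
        (fun r hr => pow_ne_zero 5 (hposIcc r hr))
  have hdh : ∀ r : ℝ, r ≠ 0 → deriv h r = h1f r := fun r hr => (dh r hr).deriv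
  -- the potential as a function of r, affine in the constant c = ℓ(ℓ+1)
  obtain ⟨Af, hAf⟩ : ∃ f : ℝ → ℝ → ℝ, ∀ c r, f c r = h1f r / r + c / r^2 - α/l^2 :=
    ⟨_, fun _ _ => rfl⟩
  obtain ⟨Bf, hBf⟩ : ∃ f : ℝ → ℝ → ℝ, ∀ c r, f c r = h2f r / r - h1f r / r^2 - 2*c/r^3 :=
    ⟨_, fun _ _ => rfl⟩
  obtain ⟨Bpf, hBpf⟩ : ∃ f : ℝ → ℝ → ℝ, ∀ c r,
      f c r = h3f r / r - 2*h2f r / r^2 + 2*h1f r / r^3 + 6*c/r^4 := ⟨_, fun _ _ => rfl⟩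
  have dA : ∀ (c : ℝ) (r : ℝ), r ≠ 0 → HasDerivAt (Af c) (Bf c r) r := by
    intro c r hr
    have hfn : Af c = fun r => h1f r / r + c / r^2 - α/l^2 := funext (hAf c)
    rw [hfn]
    have t1 := (dh1 r hr).div (hasDerivAt_id r) hr
    have t2 := (hasDerivAt_const r c).div (p2 r) (pow_ne_zero 2 hr)
    have key := (t1.add t2).sub_const (α/l^2)
    refine key.congr_deriv ?_
    rw [hBf]
    simp only [id]
    field_simp
    ring
  have dB : ∀ (c : ℝ) (r : ℝ), r ≠ 0 → HasDerivAt (Bf c) (Bpf c r) r := by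
    intro c r hr
    have hfn : Bf c = fun r => h2f r / r - h1f r / r^2 - 2*c/r^3 := funext (hBf c)
    rw [hfn]
    have t1 := (dh2 r hr).div (hasDerivAt_id r) hr
    have t2 := (dh1 r hr).div (p2 r) (pow_ne_zero 2 hr)
    have t3 := (hasDerivAt_const r (2*c)).div (p3 r) (pow_ne_zero 3 hr)
    have key := (t1.sub t2).sub t3
    refine key.congr_deriv ?_
    rw [hBpf]
    simp only [id]
    field_simp
    ring
  obtain ⟨Gf, hGf⟩ : ∃ f : ℝ → ℝ → ℝ, ∀ c r, f c r = h r * Af c r := ⟨_, fun _ _ => rfl⟩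
  obtain ⟨G1f, hG1f⟩ : ∃ f : ℝ → ℝ → ℝ, ∀ c r, f c r = h1f r * Af c r + h r * Bf c r :=
    ⟨_, fun _ _ => rfl⟩
  obtain ⟨G2f, hG2f⟩ : ∃ f : ℝ → ℝ → ℝ, ∀ c r,
      f c r = h2f r * Af c r + 2*(h1f r * Bf c r) + h r * Bpf c r := ⟨_, fun _ _ => rfl⟩
  have dG : ∀ (c : ℝ) (r : ℝ), r ≠ 0 → HasDerivAt (Gf c) (G1f c r) r := by
    intro c r hr
    have hfn : Gf c = fun r => h r * Af c r := funext (hGf c)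
    rw [hfn]
    have key := (dh r hr).mul (dA c r hr)
    refine key.congr_deriv ?_
    rw [hG1f]
  have dG1 : ∀ (c : ℝ) (r : ℝ), r ≠ 0 → HasDerivAt (G1f c) (G2f c r) r := by
    intro c r hr
    have hfn : G1f c = fun r => h1f r * Af c r + h r * Bf c r := funext (hG1f c)
    rw [hfn]
    have key := ((dh1 r hr).mul (dA c r hr)).add ((dh r hr).mul (dB c r hr))
    refine key.congr_deriv ?_
    rw [hG2f]
    ring
  have dGG1 : ∀ (c : ℝ) (r : ℝ), r ≠ 0 →
      HasDerivAt (fun y => G1f c y * h y) (G2f c r * h r + G1f c r * h1f r) r :=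
    fun c r hr => (dG1 c r hr).mul (dh r hr)
  -- rewriting V and its derivatives
  have hVfun : ∀ ℓ : ℕ, V ℓ = fun x => Gf ((ℓ:ℝ)*((ℓ:ℝ)+1)) (rfun x) := by
    intro ℓ; funext x
    rw [hV, hGf, hAf, hdh _ (hrfun_ne x)]
  have hVx : ∀ (ℓ : ℕ) (x : ℝ), V ℓ x = h (rfun x) * Af ((ℓ:ℝ)*((ℓ:ℝ)+1)) (rfun x) := by
    intro ℓ x
    rw [hV, hAf, hdh _ (hrfun_ne x)]
  have dV : ∀ (ℓ : ℕ) (x : ℝ),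
      HasDerivAt (V ℓ) (G1f ((ℓ:ℝ)*((ℓ:ℝ)+1)) (rfun x) * h (rfun x)) x := by
    intro ℓ x
    rw [hVfun ℓ]
    exact (dG _ _ (hrfun_ne x)).comp x (hrd x)
  have hderivV : ∀ ℓ : ℕ, deriv (V ℓ) = fun x => G1f ((ℓ:ℝ)*((ℓ:ℝ)+1)) (rfun x) * h (rfun x) :=
    fun ℓ => funext fun x => (dV ℓ x).deriv
  have dV2 : ∀ (ℓ : ℕ) (x : ℝ), HasDerivAt (deriv (V ℓ))
      ((G2f ((ℓ:ℝ)*((ℓ:ℝ)+1)) (rfun x) * h (rfun x)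
        + G1f ((ℓ:ℝ)*((ℓ:ℝ)+1)) (rfun x) * h1f (rfun x)) * h (rfun x)) x := by
    intro ℓ x
    rw [hderivV ℓ]
    exact (dGG1 _ _ (hrfun_ne x)).comp x (hrd x)
  -- continuity on the compact interval
  have conth : ContinuousOn h (Icc rm rp) :=
    fun r hr => (dh r (hposIcc r hr)).continuousAt.continuousWithinAt
  have conth1 : ContinuousOn h1f (Icc rm rp) :=
    fun r hr => (dh1 r (hposIcc r hr)).continuousAt.continuousWithinAt
  have conth2 : ContinuousOn h2f (Icc rm rp) :=
    fun r hr => (dh2 r (hposIcc r hr)).continuousAt.continuousWithinAt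
  have contAf : ∀ c : ℝ, ContinuousOn (Af c) (Icc rm rp) :=
    fun c r hr => (dA c r (hposIcc r hr)).continuousAt.continuousWithinAt
  have contBf : ∀ c : ℝ, ContinuousOn (Bf c) (Icc rm rp) :=
    fun c r hr => (dB c r (hposIcc r hr)).continuousAt.continuousWithinAt
  have contG1f : ∀ c : ℝ, ContinuousOn (G1f c) (Icc rm rp) :=
    fun c r hr => (dG1 c r (hposIcc r hr)).continuousAt.continuousWithinAt
  have contBpf : ∀ c : ℝ, ContinuousOn (Bpf c) (Icc rm rp) := by
    intro c
    have hfn : Bpf c = fun r => h3f r / r - 2*h2f r / r^2 + 2*h1f r / r^3 + 6*c/r^4 :=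
      funext (hBpf c)
    rw [hfn]
    have t1 : ContinuousOn (fun r : ℝ => h3f r / r) (Icc rm rp) :=
      conth3.div (continuous_id.continuousOn) hposIcc
    have t2 : ContinuousOn (fun r : ℝ => 2*h2f r / r^2) (Icc rm rp) :=
      (continuousOn_const.mul conth2).div (by fun_prop)
        (fun r hr => pow_ne_zero 2 (hposIcc r hr))
    have t3 : ContinuousOn (fun r : ℝ => 2*h1f r / r^3) (Icc rm rp) :=
      (continuousOn_const.mul conth1).div (by fun_prop)
        (fun r hr => pow_ne_zero 3 (hposIcc r hr))
    have t4 : ContinuousOn (fun r : ℝ => 6*c/r^4) (Icc rm rp) :=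
      continuousOn_const.div (by fun_prop) (fun r hr => pow_ne_zero 4 (hposIcc r hr))
    exact ((t1.sub t2).add t3).add t4
  have contG2f : ∀ c : ℝ, ContinuousOn (G2f c) (Icc rm rp) := by
    intro c
    have hfn : G2f c = fun r => h2f r * Af c r + 2*(h1f r * Bf c r) + h r * Bpf c r :=
      funext (hG2f c)
    rw [hfn]
    exact ((conth2.mul (contAf c)).add
      (continuousOn_const.mul (conth1.mul (contBf c)))).add (conth.mul (contBpf c))
  have contS3 : ∀ c : ℝ, ContinuousOn (fun r => G2f c r * h r + G1f c r * h1f r) (Icc rm rp) :=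
    fun c => ((contG2f c).mul conth).add ((contG1f c).mul conth1)
  -- compact bounds
  obtain ⟨K1, hK1⟩ := (isCompact_Icc (a := rm) (b := rp)).exists_bound_of_continuousOn (contAf 0)
  obtain ⟨K2, hK2⟩ := (isCompact_Icc (a := rm) (b := rp)).exists_bound_of_continuousOn
    ((contAf 1).sub (contAf 0))
  obtain ⟨K3, hK3⟩ := (isCompact_Icc (a := rm) (b := rp)).exists_bound_of_continuousOn (contG1f 0)
  obtain ⟨K4, hK4⟩ := (isCompact_Icc (a := rm) (b := rp)).exists_bound_of_continuousOn
    ((contG1f 1).sub (contG1f 0))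
  obtain ⟨K5, hK5⟩ := (isCompact_Icc (a := rm) (b := rp)).exists_bound_of_continuousOn (contS3 0)
  obtain ⟨K6, hK6⟩ := (isCompact_Icc (a := rm) (b := rp)).exists_bound_of_continuousOn
    ((contS3 1).sub (contS3 0))
  -- affine dependence on c
  have haffA : ∀ c r : ℝ, Af c r = Af 0 r + c * (Af 1 r - Af 0 r) := by
    intro c r; rw [hAf, hAf, hAf]; ring
  have haffG1 : ∀ c r : ℝ, G1f c r = G1f 0 r + c * (G1f 1 r - G1f 0 r) := by
    intro c r; simp only [hG1f, hAf, hBf]; ring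
  have haffS3 : ∀ c r : ℝ, G2f c r * h r + G1f c r * h1f r
      = (G2f 0 r * h r + G1f 0 r * h1f r)
        + c * ((G2f 1 r * h r + G1f 1 r * h1f r) - (G2f 0 r * h r + G1f 0 r * h1f r)) := by
    intro c r; simp only [hG2f, hG1f, hAf, hBf, hBpf]; ring
  -- generic bound for affine-in-c quantities
  have bound : ∀ ℓ : ℕ, 1 ≤ ℓ → ∀ u v KA KB : ℝ, |u| ≤ KA → |v| ≤ KB →
      |u + ((ℓ:ℝ)*((ℓ:ℝ)+1)) * v| ≤ (|KA| + 2*|KB|) * (ℓ:ℝ)^2 := by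
    intro ℓ hℓ u v KA KB hu hv
    have hl1 : (1:ℝ) ≤ (ℓ:ℝ) := by exact_mod_cast hℓ
    have hc : (0:ℝ) ≤ (ℓ:ℝ)*((ℓ:ℝ)+1) := by positivity
    have hc2 : (ℓ:ℝ)*((ℓ:ℝ)+1) ≤ 2*(ℓ:ℝ)^2 := by nlinarith
    have hsq : (1:ℝ) ≤ (ℓ:ℝ)^2 := by nlinarith
    have h1 : |u + ((ℓ:ℝ)*((ℓ:ℝ)+1)) * v| ≤ |u| + ((ℓ:ℝ)*((ℓ:ℝ)+1))*|v| := by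
      calc |u + ((ℓ:ℝ)*((ℓ:ℝ)+1)) * v| ≤ |u| + |((ℓ:ℝ)*((ℓ:ℝ)+1)) * v| := abs_add_le _ _
       _ = |u| + ((ℓ:ℝ)*((ℓ:ℝ)+1))*|v| := by rw [abs_mul, abs_of_nonneg hc]
    have h2 : ((ℓ:ℝ)*((ℓ:ℝ)+1))*|v| ≤ (2*(ℓ:ℝ)^2)*|KB| :=
      mul_le_mul hc2 (hv.trans (le_abs_self KB)) (abs_nonneg v) (by positivity)
    have h3 : |u| ≤ |KA| := hu.trans (le_abs_self KA)
    nlinarith [abs_nonneg KA, abs_nonneg KB, abs_nonneg u]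
  -- the final constant
  obtain ⟨KS, hKS⟩ : ∃ KS : ℝ, KS = |K1|+2*|K2|+|K3|+2*|K4|+|K5|+2*|K6|+1 := ⟨_, rfl⟩
  have hKSpos : 0 < KS := by
    rw [hKS]
    have := abs_nonneg K1; have := abs_nonneg K2; have := abs_nonneg K3
    have := abs_nonneg K4; have := abs_nonneg K5; have := abs_nonneg K6
    linarith
  refine ⟨C0 * KS, by positivity, ?_⟩
  intro ℓ hℓ x
  have hnorm : ∀ y : ℝ, ‖y‖ = |y| := fun y => rfl
  set c : ℝ := (ℓ:ℝ)*((ℓ:ℝ)+1) with hc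
  set r : ℝ := rfun x with hr
  set E : ℝ := Real.exp (-2 * min κp κm * |x|) with hE
  have hEpos : 0 < E := Real.exp_pos _
  have hrmem := hrIcc x
  -- the three component bounds
  have bA : |Af c r| ≤ (|K1| + 2*|K2|) * (ℓ:ℝ)^2 := by
    rw [haffA]
    exact bound ℓ hℓ _ _ _ _ (by simpa using hK1 r hrmem) (by simpa using hK2 r hrmem)
  have bG1 : |G1f c r| ≤ (|K3| + 2*|K4|) * (ℓ:ℝ)^2 := by
    rw [haffG1]
    exact bound ℓ hℓ _ _ _ _ (by simpa using hK3 r hrmem) (by simpa using hK4 r hrmem)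
  have bS3 : |G2f c r * h r + G1f c r * h1f r| ≤ (|K5| + 2*|K6|) * (ℓ:ℝ)^2 := by
    rw [haffS3]
    exact bound ℓ hℓ _ _ _ _ (by simpa using hK5 r hrmem) (by simpa using hK6 r hrmem)
  have hhb : |h r| ≤ C0 * E := hC0 x
  have step : ∀ S KSi : ℝ, 0 ≤ KSi → KSi ≤ KS → |S| ≤ KSi*(ℓ:ℝ)^2 →
      |h r * S| ≤ C0 * KS * (ℓ:ℝ)^2 * E := by
    intro S KSi hKSi0 hKSile hS
    rw [abs_mul]
    have t1 : |h r| * |S| ≤ (C0*E) * (KSi*(ℓ:ℝ)^2) :=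
      mul_le_mul hhb hS (abs_nonneg S) (by positivity)
    have hl2' : (0:ℝ) < (ℓ:ℝ)^2 := by
      have : (1:ℝ) ≤ (ℓ:ℝ) := by exact_mod_cast hℓ
      positivity
    nlinarith [mul_le_mul_of_nonneg_right
      (mul_le_mul_of_nonneg_left hKSile hC0pos.le)
      (mul_nonneg hl2'.le hEpos.le)]
  have hK12le : |K1| + 2*|K2| ≤ KS := by
    rw [hKS]
    have := abs_nonneg K3; have := abs_nonneg K4; have := abs_nonneg K5
    have := abs_nonneg K6
    linarith
  have hK34le : |K3| + 2*|K4| ≤ KS := by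
    rw [hKS]
    have := abs_nonneg K1; have := abs_nonneg K2; have := abs_nonneg K5
    have := abs_nonneg K6
    linarith
  have hK56le : |K5| + 2*|K6| ≤ KS := by
    rw [hKS]
    have := abs_nonneg K1; have := abs_nonneg K2; have := abs_nonneg K3
    have := abs_nonneg K4
    linarith
  have habsnn : ∀ a b : ℝ, (0:ℝ) ≤ |a| + 2*|b| := by
    intro a b; have := abs_nonneg a; have := abs_nonneg b; linarith
  refine ⟨?_, ?_, ?_⟩
  · rw [hVx ℓ x]
    exact step _ _ (habsnn K1 K2) hK12le bA
  · rw [(dV ℓ x).deriv, mul_comm]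
    exact step _ _ (habsnn K3 K4) hK34le bG1
  · rw [(dV2 ℓ x).deriv, mul_comm]
    exact step _ _ (habsnn K5 K6) hK56le bS3

/-- exponential decay bounds, uniform in ℓ, for the interior potential
V_ℓ and its first two derivatives in the tortoise coordinate. -/
theorem stmt_5 (M Q l α : ℝ) (hM : 0 < M) (hQ : Q ≠ 0) (hl : 0 < l) (hα : α < 9 / 4)
    (Δ : ℝ → ℝ) (hΔ : ∀ r, Δ r = r ^ 2 - 2 * M * r + r ^ 4 / l ^ 2 + Q ^ 2)
    (rm rp : ℝ) (hrm : 0 < rm) (hmp : rm < rp)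
    (hΔm : Δ rm = 0) (hΔp : Δ rp = 0)
    (honly : ∀ r, 0 < r → Δ r = 0 → r = rm ∨ r = rp)
    (κp κm : ℝ) (hκp : κp = deriv Δ rp / (2 * rp ^ 2)) (hκm : κm = -deriv Δ rm / (2 * rm ^ 2))
    (hκp_pos : 0 < κp) (hκm_pos : 0 < κm)
    (rstar : ℝ → ℝ) (hrstar : ∀ r ∈ Ioo rm rp, HasDerivAt rstar (r ^ 2 / Δ r) r)
    (rfun : ℝ → ℝ) (hrfun_mem : ∀ x : ℝ, rfun x ∈ Ioo rm rp)
    (hrfun_inv : ∀ x : ℝ, rstar (rfun x) = x)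
    (hrfun_inv' : ∀ r ∈ Ioo rm rp, rfun (rstar r) = r)
    (h : ℝ → ℝ) (hh : ∀ r, h r = Δ r / r ^ 2)
    (V : ℕ → ℝ → ℝ)
    (hV : ∀ (ℓ : ℕ) (x : ℝ), V ℓ x =
      h (rfun x) * (deriv h (rfun x) / rfun x + (ℓ : ℝ) * ((ℓ : ℝ) + 1) / (rfun x) ^ 2 - α / l ^ 2)) :
    ∃ C > 0, ∀ ℓ : ℕ, 1 ≤ ℓ → ∀ x : ℝ,
      |V ℓ x| ≤ C * (ℓ : ℝ) ^ 2 * Real.exp (-2 * min κp κm * |x|) ∧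
      |deriv (V ℓ) x| ≤ C * (ℓ : ℝ) ^ 2 * Real.exp (-2 * min κp κm * |x|) ∧
      |deriv (deriv (V ℓ)) x| ≤ C * (ℓ : ℝ) ^ 2 * Real.exp (-2 * min κp κm * |x|) := by
  obtain ⟨C0, hC0pos, hrd, hC0⟩ := core_decay M Q l hl Δ hΔ rm rp hrm hmp hΔm hΔp
    κp κm hκp hκm hκp_pos hκm_pos rstar hrstar rfun hrfun_mem hrfun_inv hrfun_inv' h hh
  exact stage5 M Q l α hM hQ hl hα Δ hΔ rm rp hrm hmp κp κm rfun hrfun_mem h hh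
    C0 hC0pos hrd hC0 V hV
end

section
/- Let κ, c₁, c₂ > 0. There exist C > 0 and L₀ ≥ 1 (depending only on κ, c₁, c₂) with the following property. For every integer ℓ ≥ L₀, every interval [a, b] ⊂ ℝ, and every twice continuously differentiable function f : [a, b] → ℂ such that f(x) ∉ (−∞, 0] for all x, |f(x)| ≥ c₁ ℓ² for all x, and |f′(x)| ≤ c₂ ℓ² e^{−2κ|x|} and |f″(x)| ≤ c₂ ℓ² e^{−2κ|x|} for all x ∈ [a, b], one has ∫_{a}^{b} | f(x)^{−1/4} · (d²/dx²)( f(x)^{−1/4} ) | dx ≤ C/ℓ, where z^{−1/4} denotes the principal branch of the complex power. -/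
open Set MeasureTheory

lemma my_integrable_exp_neg_mul_abs {b : ℝ} (hb : 0 < b) :
    Integrable (fun x : ℝ => Real.exp (-b * |x|)) := by
  have h1 : IntegrableOn (fun x : ℝ => Real.exp (-b * |x|)) (Ici 0) := by
    rw [integrableOn_Ici_iff_integrableOn_Ioi]
    exact (exp_neg_integrableOn_Ioi 0 hb).congr_fun
      (fun x hx => by rw [abs_of_pos hx]) measurableSet_Ioi
  have h2 : IntegrableOn (fun x : ℝ => Real.exp (-b * |x|)) (Iic 0) := by
    have A : MeasurableEmbedding (fun x : ℝ => -x) :=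
      (Homeomorph.neg ℝ).isClosedEmbedding.measurableEmbedding
    have hmap : Measure.map (fun x : ℝ => -x) (volume.restrict (Ici (0:ℝ)))
        = volume.restrict (Iic (0:ℝ)) := by
      have := A.restrict_map (volume : Measure ℝ) (Iic (0:ℝ))
      simpa [Measure.map_neg_eq_self, neg_preimage, neg_Iic, neg_zero] using this.symm
    rw [IntegrableOn, ← hmap, A.integrable_map_iff]
    simp only [Function.comp_def, abs_neg]
    exact h1
  have hu : IntegrableOn (fun x : ℝ => Real.exp (-b * |x|)) (Iic 0 ∪ Ici 0) := h2.union h1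
  rw [Iic_union_Ici, integrableOn_univ] at hu
  exact hu

lemma my_aux_bound (c₁ c₂ E L r P Q : ℝ) (hc₁ : 0 < c₁) (hc₂ : 0 < c₂)
    (hL : 1 ≤ L) (hE0 : 0 < E) (hE1 : E ≤ 1)
    (hr : c₁ * L ^ 2 ≤ r) (hP0 : 0 ≤ P) (hP : P ≤ c₂ * L ^ 2 * E)
    (hQ0 : 0 ≤ Q) (hQ : Q ≤ c₂ * L ^ 2 * E) :
    r ^ (-(1/4) : ℝ) * ((1/4) * ((5/4) * r ^ (-(9/4) : ℝ) * P * P + r ^ (-(5/4) : ℝ) * Q))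
      ≤ (5/16 * c₁ ^ (-(5/2) : ℝ) * c₂ ^ 2 + 1/4 * c₁ ^ (-(3/2) : ℝ) * c₂) * E / L := by
  have hL0 : (0:ℝ) < L := lt_of_lt_of_le one_pos hL
  have hr0 : (0:ℝ) < r := lt_of_lt_of_le (by positivity) hr
  have e1 : r ^ (-(1/4) : ℝ) * r ^ (-(9/4) : ℝ) = r ^ (-(5/2) : ℝ) := by
    rw [← Real.rpow_add hr0]; norm_num
  have e2 : r ^ (-(1/4) : ℝ) * r ^ (-(5/4) : ℝ) = r ^ (-(3/2) : ℝ) := by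
    rw [← Real.rpow_add hr0]; norm_num
  have lhs_eq : r ^ (-(1/4) : ℝ) * ((1/4) * ((5/4) * r ^ (-(9/4) : ℝ) * P * P
      + r ^ (-(5/4) : ℝ) * Q))
      = 5/16 * (r ^ (-(5/2) : ℝ) * (P * P)) + 1/4 * (r ^ (-(3/2) : ℝ) * Q) := by
    rw [← e1, ← e2]; ring
  rw [lhs_eq]
  have eL : ∀ k : ℕ, (L : ℝ) ^ (-(k:ℝ)) = (L ^ k)⁻¹ := fun k => by
    rw [Real.rpow_neg hL0.le, Real.rpow_natCast]
  have hA : r ^ (-(5/2) : ℝ) ≤ c₁ ^ (-(5/2) : ℝ) * (L ^ (5:ℕ))⁻¹ := by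
    have h := Real.rpow_le_rpow_of_nonpos (by positivity) hr (by norm_num : (-(5/2):ℝ) ≤ 0)
    have e : (c₁ * L ^ 2) ^ (-(5/2) : ℝ) = c₁ ^ (-(5/2) : ℝ) * (L ^ (5:ℕ))⁻¹ := by
      rw [Real.mul_rpow hc₁.le (by positivity), ← Real.rpow_natCast L 2,
        ← Real.rpow_mul hL0.le]
      rw [← eL 5]; norm_num
    rw [← e]; exact h
  have hB : r ^ (-(3/2) : ℝ) ≤ c₁ ^ (-(3/2) : ℝ) * (L ^ (3:ℕ))⁻¹ := by
    have h := Real.rpow_le_rpow_of_nonpos (by positivity) hr (by norm_num : (-(3/2):ℝ) ≤ 0)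
    have e : (c₁ * L ^ 2) ^ (-(3/2) : ℝ) = c₁ ^ (-(3/2) : ℝ) * (L ^ (3:ℕ))⁻¹ := by
      rw [Real.mul_rpow hc₁.le (by positivity), ← Real.rpow_natCast L 2,
        ← Real.rpow_mul hL0.le]
      rw [← eL 3]; norm_num
    rw [← e]; exact h
  have hPP : P * P ≤ c₂ ^ 2 * L ^ 4 * E := by nlinarith
  have t1 : r ^ (-(5/2) : ℝ) * (P * P) ≤ c₁ ^ (-(5/2) : ℝ) * c₂ ^ 2 * E / L := by
    calc r ^ (-(5/2) : ℝ) * (P * P)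
        ≤ (c₁ ^ (-(5/2) : ℝ) * (L ^ (5:ℕ))⁻¹) * (c₂ ^ 2 * L ^ 4 * E) := by
          apply mul_le_mul hA hPP (by positivity) (by positivity)
      _ = c₁ ^ (-(5/2) : ℝ) * c₂ ^ 2 * E / L := by field_simp
  have t2 : r ^ (-(3/2) : ℝ) * Q ≤ c₁ ^ (-(3/2) : ℝ) * c₂ * E / L := by
    calc r ^ (-(3/2) : ℝ) * Q
        ≤ (c₁ ^ (-(3/2) : ℝ) * (L ^ (3:ℕ))⁻¹) * (c₂ * L ^ 2 * E) := by
          apply mul_le_mul hB hQ hQ0 (by positivity)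
      _ = c₁ ^ (-(3/2) : ℝ) * c₂ * E / L := by field_simp
  have expand : (5/16 * c₁ ^ (-(5/2) : ℝ) * c₂ ^ 2 + 1/4 * c₁ ^ (-(3/2) : ℝ) * c₂) * E / L
      = 5/16 * (c₁ ^ (-(5/2) : ℝ) * c₂ ^ 2 * E / L) + 1/4 * (c₁ ^ (-(3/2) : ℝ) * c₂ * E / L) := by
    ring
  rw [expand]
  nlinarith [t1, t2]

lemma my_norm_cpow (z : ℂ) (hz : z ≠ 0) (w : ℂ) (hw : w.im = 0) : ‖z ^ w‖ = ‖z‖ ^ w.re := by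
  rw [Complex.norm_cpow_of_ne_zero hz, hw, mul_zero,
    Real.exp_zero, div_one]

lemma my_second_deriv (a b : ℝ) (hab : a < b) (f : ℝ → ℂ)
    (hf : ContDiffOn ℝ 2 f (Icc a b))
    (hslit : ∀ x ∈ Icc a b, f x ∈ Complex.slitPlane) (x : ℝ) (hx : x ∈ Icc a b) :
    derivWithin (derivWithin (fun y : ℝ => f y ^ (-(1 / 4) : ℂ)) (Icc a b)) (Icc a b) x
      = (-(1/4) : ℂ) * (((-(1/4) : ℂ) - 1) * f x ^ ((-(1/4) : ℂ) - 1 - 1)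
          * derivWithin f (Icc a b) x * derivWithin f (Icc a b) x
        + f x ^ ((-(1/4) : ℂ) - 1)
          * derivWithin (derivWithin f (Icc a b)) (Icc a b) x) := by
  set s := Icc a b with hs
  have huniq : UniqueDiffOn ℝ s := uniqueDiffOn_Icc hab
  set F' := derivWithin f s with hF'
  set F'' := derivWithin F' s with hF''
  have hf_diff : ∀ y ∈ s, HasDerivWithinAt f (F' y) s y := fun y hy =>
    ((hf.differentiableOn (by norm_num)) y hy).hasDerivWithinAt
  have hF'cd : ContDiffOn ℝ 1 F' s := hf.derivWithin huniq (by norm_num)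
  have hF'_diff : ∀ y ∈ s, HasDerivWithinAt F' (F'' y) s y := fun y hy =>
    ((hF'cd.differentiableOn (by norm_num)) y hy).hasDerivWithinAt
  have hg1 : ∀ y ∈ s, HasDerivWithinAt (fun y : ℝ => f y ^ (-(1/4) : ℂ))
      ((-(1/4) : ℂ) * f y ^ ((-(1/4) : ℂ) - 1) * F' y) s y := fun y hy =>
    (Complex.hasStrictDerivAt_cpow_const (hslit y hy)).hasDerivAt.comp_hasDerivWithinAt y
      (hf_diff y hy)
  have hgder : ∀ y ∈ s, derivWithin (fun y : ℝ => f y ^ (-(1/4) : ℂ)) s y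
      = (-(1/4) : ℂ) * f y ^ ((-(1/4) : ℂ) - 1) * F' y := fun y hy =>
    (hg1 y hy).derivWithin (huniq y hy)
  have hG2 : HasDerivWithinAt (fun y => (-(1/4) : ℂ) * f y ^ ((-(1/4) : ℂ) - 1) * F' y)
      ((-(1/4) : ℂ) * ((((-(1/4) : ℂ) - 1) * f x ^ ((-(1/4) : ℂ) - 1 - 1) * F' x) * F' x
        + f x ^ ((-(1/4) : ℂ) - 1) * F'' x)) s x := by
    have h1 : HasDerivWithinAt (fun y => f y ^ ((-(1/4) : ℂ) - 1))
        (((-(1/4) : ℂ) - 1) * f x ^ ((-(1/4) : ℂ) - 1 - 1) * F' x) s x :=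
      (Complex.hasStrictDerivAt_cpow_const (hslit x hx)).hasDerivAt.comp_hasDerivWithinAt x
        (hf_diff x hx)
    have h2 := h1.mul (hF'_diff x hx)
    have h3 := h2.const_mul ((-(1/4) : ℂ))
    simpa [mul_assoc] using h3
  have hD : HasDerivWithinAt (derivWithin (fun y : ℝ => f y ^ (-(1/4) : ℂ)) s)
      ((-(1/4) : ℂ) * ((((-(1/4) : ℂ) - 1) * f x ^ ((-(1/4) : ℂ) - 1 - 1) * F' x) * F' x
        + f x ^ ((-(1/4) : ℂ) - 1) * F'' x)) s x :=
    hG2.congr (fun y hy => hgder y hy) (hgder x hx)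
  rw [hD.derivWithin (huniq x hx)]

/-- the WKB (Liouville–Green) error-control integral
∫_a^b |f^{−1/4} (f^{−1/4})″| dx is O(1/ℓ) for complex potentials f avoiding (−∞, 0]
with |f| ≳ ℓ² and exponentially decaying first and second derivatives. -/
theorem stmt_9 (κ c₁ c₂ : ℝ) (hκ : 0 < κ) (hc₁ : 0 < c₁) (hc₂ : 0 < c₂) :
    ∃ C > 0, ∃ L₀ : ℕ, 1 ≤ L₀ ∧
      ∀ ℓ : ℕ, L₀ ≤ ℓ → ∀ a b : ℝ, a ≤ b → ∀ f : ℝ → ℂ,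
        ContDiffOn ℝ 2 f (Icc a b) →
        (∀ x ∈ Icc a b, ¬((f x).im = 0 ∧ (f x).re ≤ 0)) →
        (∀ x ∈ Icc a b, c₁ * (ℓ : ℝ) ^ 2 ≤ ‖f x‖) →
        (∀ x ∈ Icc a b, ‖derivWithin f (Icc a b) x‖ ≤ c₂ * (ℓ : ℝ) ^ 2 * Real.exp (-2 * κ * |x|)) →
        (∀ x ∈ Icc a b, ‖derivWithin (derivWithin f (Icc a b)) (Icc a b) x‖ ≤
          c₂ * (ℓ : ℝ) ^ 2 * Real.exp (-2 * κ * |x|)) →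
        (∫ x in a..b, ‖f x ^ (-(1 / 4) : ℂ) *
            derivWithin (derivWithin (fun y : ℝ => f y ^ (-(1 / 4) : ℂ)) (Icc a b)) (Icc a b) x‖)
          ≤ C / (ℓ : ℝ) := by
  set M : ℝ := 5/16 * c₁ ^ (-(5/2) : ℝ) * c₂ ^ 2 + 1/4 * c₁ ^ (-(3/2) : ℝ) * c₂ with hM
  have hM0 : 0 < M := by positivity
  set I : ℝ := ∫ x : ℝ, Real.exp (-2 * κ * |x|) with hI
  have hwint : Integrable (fun x : ℝ => Real.exp (-2 * κ * |x|)) := by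
    have := my_integrable_exp_neg_mul_abs (b := 2 * κ) (by positivity)
    convert this using 2 with x
    ring_nf
  have hI0 : 0 ≤ I := integral_nonneg fun x => (Real.exp_pos _).le
  refine ⟨M * I + 1, by positivity, 1, le_refl 1, ?_⟩
  intro ℓ hℓ a b hab f hf hslit0 hlow hd1 hd2
  have hL1 : (1:ℝ) ≤ (ℓ : ℝ) := by exact_mod_cast hℓ
  have hL0 : (0:ℝ) < (ℓ : ℝ) := lt_of_lt_of_le one_pos hL1
  rcases eq_or_lt_of_le hab with rfl | hab'
  · rw [intervalIntegral.integral_same]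
    positivity
  have hslit : ∀ x ∈ Icc a b, f x ∈ Complex.slitPlane := by
    intro x hx
    rw [Complex.mem_slitPlane_iff]
    by_cases him : (f x).im = 0
    · exact Or.inl (lt_of_not_ge fun hre => hslit0 x hx ⟨him, hre⟩)
    · exact Or.inr him
  have hfne : ∀ x ∈ Icc a b, f x ≠ 0 := by
    intro x hx h0
    have := hlow x hx
    rw [h0, norm_zero] at this
    nlinarith [mul_pos hc₁ (mul_pos hL0 hL0)]
  set F' := derivWithin f (Icc a b) with hF'
  set F'' := derivWithin F' (Icc a b) with hF''
  -- pointwise bound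
  have hpt : ∀ x ∈ Icc a b,
      ‖f x ^ (-(1 / 4) : ℂ) *
        derivWithin (derivWithin (fun y : ℝ => f y ^ (-(1 / 4) : ℂ)) (Icc a b)) (Icc a b) x‖
      ≤ M * Real.exp (-2 * κ * |x|) / (ℓ : ℝ) := by
    intro x hx
    rw [my_second_deriv a b hab' f hf hslit x hx]
    have hne := hfne x hx
    set r : ℝ := ‖f x‖ with hr
    have hrlow : c₁ * (ℓ : ℝ) ^ 2 ≤ r := hlow x hx
    have hE0 : 0 < Real.exp (-2 * κ * |x|) := Real.exp_pos _
    have hE1 : Real.exp (-2 * κ * |x|) ≤ 1 := by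
      rw [Real.exp_le_one_iff]
      nlinarith [abs_nonneg x]
    have er1 : ((-(1/4) : ℂ)).re = (-(1/4) : ℝ) := by simp
    have er2 : ((-(1/4) : ℂ) - 1 - 1).re = (-(9/4) : ℝ) := by simp; norm_num
    have er3 : ((-(1/4) : ℂ) - 1).re = (-(5/4) : ℝ) := by simp; norm_num
    have hn1 : ‖f x ^ (-(1/4) : ℂ)‖ = r ^ (-(1/4) : ℝ) := by
      rw [my_norm_cpow (f x) hne _ (by simp), er1]
    have hn2 : ‖f x ^ ((-(1/4) : ℂ) - 1 - 1)‖ = r ^ (-(9/4) : ℝ) := by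
      rw [my_norm_cpow (f x) hne _ (by simp), er2]
    have hn3 : ‖f x ^ ((-(1/4) : ℂ) - 1)‖ = r ^ (-(5/4) : ℝ) := by
      rw [my_norm_cpow (f x) hne _ (by simp), er3]
    have hnc : ‖(-(1/4) : ℂ)‖ = 1/4 := by simp
    have hnc1 : ‖(-(1/4) : ℂ) - 1‖ = 5/4 := by
      rw [show (-(1/4) : ℂ) - 1 = ((-(5/4) : ℝ) : ℂ) by push_cast; ring, Complex.norm_real]
      norm_num
    have step : ‖f x ^ (-(1 / 4) : ℂ) *
        ((-(1/4) : ℂ) * (((-(1/4) : ℂ) - 1) * f x ^ ((-(1/4) : ℂ) - 1 - 1) * F' x * F' x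
          + f x ^ ((-(1/4) : ℂ) - 1) * F'' x))‖
        ≤ r ^ (-(1/4) : ℝ) * ((1/4) * ((5/4) * r ^ (-(9/4) : ℝ) * ‖F' x‖ * ‖F' x‖
          + r ^ (-(5/4) : ℝ) * ‖F'' x‖)) := by
      rw [norm_mul, hn1]
      apply mul_le_mul_of_nonneg_left _ (by positivity)
      rw [norm_mul, hnc]
      apply mul_le_mul_of_nonneg_left _ (by norm_num)
      apply (norm_add_le _ _).trans
      apply add_le_add
      · rw [norm_mul, norm_mul, norm_mul, hnc1, hn2]
      · rw [norm_mul, hn3]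
    apply step.trans
    exact my_aux_bound c₁ c₂ (Real.exp (-2 * κ * |x|)) (ℓ : ℝ) r ‖F' x‖ ‖F'' x‖
      hc₁ hc₂ hL1 hE0 hE1 hrlow (norm_nonneg _) (hd1 x hx) (norm_nonneg _) (hd2 x hx)
  -- continuity of the dominating expression / integrand
  have huniq : UniqueDiffOn ℝ (Icc a b) := uniqueDiffOn_Icc hab'
  have hfc : ContinuousOn f (Icc a b) := hf.continuousOn
  have hF'cd : ContDiffOn ℝ 1 F' (Icc a b) := hf.derivWithin huniq (by norm_num)
  have hF'c : ContinuousOn F' (Icc a b) := hF'cd.continuousOn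
  have hF''c : ContinuousOn F'' (Icc a b) := (hF'cd.derivWithin (m := 0) huniq (by norm_num)).continuousOn
  have hcont : ContinuousOn (fun x => ‖f x ^ (-(1 / 4) : ℂ) *
      ((-(1/4) : ℂ) * (((-(1/4) : ℂ) - 1) * f x ^ ((-(1/4) : ℂ) - 1 - 1) * F' x * F' x
        + f x ^ ((-(1/4) : ℂ) - 1) * F'' x))‖) (Icc a b) := by
    apply ContinuousOn.norm
    apply ContinuousOn.mul
    · exact hfc.cpow continuousOn_const hslit
    · apply ContinuousOn.mul continuousOn_const
      apply ContinuousOn.add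
      · exact ((continuousOn_const.mul (hfc.cpow continuousOn_const hslit)).mul hF'c).mul hF'c
      · exact (hfc.cpow continuousOn_const hslit).mul hF''c
  have hint1 : IntervalIntegrable (fun x => ‖f x ^ (-(1 / 4) : ℂ) *
      derivWithin (derivWithin (fun y : ℝ => f y ^ (-(1 / 4) : ℂ)) (Icc a b)) (Icc a b) x‖)
      volume a b := by
    apply ContinuousOn.intervalIntegrable
    rw [uIcc_of_le hab]
    apply hcont.congr
    intro x hx
    simp only [my_second_deriv a b hab' f hf hslit x hx]
    rfl
  have hint2 : IntervalIntegrable (fun x => M * Real.exp (-2 * κ * |x|) / (ℓ : ℝ))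
      volume a b := by
    apply Integrable.intervalIntegrable
    have : (fun x => M * Real.exp (-2 * κ * |x|) / (ℓ : ℝ))
        = fun x => (M / (ℓ : ℝ)) * Real.exp (-2 * κ * |x|) := by
      funext x; ring
    rw [this]
    exact hwint.const_mul _
  calc (∫ x in a..b, ‖f x ^ (-(1 / 4) : ℂ) *
          derivWithin (derivWithin (fun y : ℝ => f y ^ (-(1 / 4) : ℂ)) (Icc a b)) (Icc a b) x‖)
      ≤ ∫ x in a..b, M * Real.exp (-2 * κ * |x|) / (ℓ : ℝ) :=
        intervalIntegral.integral_mono_on hab hint1 hint2 hpt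
    _ = (M / (ℓ : ℝ)) * ∫ x in a..b, Real.exp (-2 * κ * |x|) := by
        rw [← intervalIntegral.integral_const_mul]
        congr 1; funext x; ring
    _ ≤ (M / (ℓ : ℝ)) * I := by
        apply mul_le_mul_of_nonneg_left _ (by positivity)
        rw [intervalIntegral.integral_of_le hab]
        exact setIntegral_le_integral hwint
          (Filter.Eventually.of_forall fun x => (Real.exp_pos _).le)
    _ ≤ (M * I + 1) / (ℓ : ℝ) := by
        rw [div_mul_eq_mul_div]
        gcongr
        linarith
end

section
/- Let κ, A, c₁, c₂, c_I > 0. There exist constants C > 0, c̃ > 0 and L₀ ≥ 1 (depending only on κ, A, c₁, c₂, c_I) with the following property. Let ℓ ≥ L₀ be an integer, let V : ℝ → ℝ be continuous with |V(x)| ≤ A ℓ² e^{−2κ|x|} for all x, let ω ∈ ℂ satisfy c₁ℓ ≤ Re(ω) ≤ c₂ℓ and 0 < −Im(ω) ≤ e^{−c_I ℓ}, and set R₂ := −1/Im(ω) > 0. Let u₊ be the unique solution of the Volterra equation u₊(x) = e^{iωx} − ∫_{x}^{∞} (sin(ω(x−y))/ω) V(y) u₊(y) dy with sup_{x ≥ 0}|e^{−iωx}u₊(x)|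 < ∞. Then sup_{x ≥ R₂} ( |e^{−iωx}u₊(x) − 1| + |e^{−iωx}(u₊′(x) − iω u₊(x))| ) ≤ C e^{−c̃ ℓ}. -/
set_option maxHeartbeats 1000000

open MeasureTheory Filter Complex Set Topology

lemma aux_exp_integrableOn {b : ℝ} (hb : 0 < b) (x : ℝ) :
    IntegrableOn (fun y => Real.exp (-b * y)) (Set.Ici x) := by
  rw [integrableOn_Ici_iff_integrableOn_Ioi]
  exact exp_neg_integrableOn_Ioi x hb

lemma aux_exp_integral {b : ℝ} (hb : 0 < b) (x : ℝ) :
    ∫ y in Set.Ici x, Real.exp (-b * y) = Real.exp (-b * x) / b := by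
  rw [integral_Ici_eq_integral_Ioi]
  have hder : ∀ y ∈ Set.Ici x, HasDerivAt (fun t => -Real.exp (-b*t)/b) (Real.exp (-b*y)) y := by
    intro y _
    have h1 : HasDerivAt (fun t : ℝ => -b*t) (-b) y := by
      simpa using (hasDerivAt_id y).const_mul (-b)
    have h2 := ((Real.hasDerivAt_exp (-b*y)).comp y h1).neg.div_const b
    convert h2 using 1
    · rfl
    · rfl
    · rfl
    · field_simp
  have htend : Tendsto (fun t => -Real.exp (-b*t)/b) atTop (nhds 0) := by
    have h1 : Tendsto (fun t : ℝ => -b*t) atTop atBot := by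
      apply Tendsto.const_mul_atTop_of_neg (neg_neg_iff_pos.mpr hb) tendsto_id
    have := (Real.tendsto_exp_atBot.comp h1).neg.div_const b
    simpa using this
  rw [integral_Ioi_of_hasDerivAt_of_tendsto' hder
    (((aux_exp_integrableOn hb x).mono_set Set.Ioi_subset_Ici_self))  htend]
  field_simp
  ring

lemma aux_norm_sin_le (z : ℂ) : ‖Complex.sin z‖ ≤ Real.exp |z.im| := by
  rw [Complex.sin]
  have h1 : ‖(Complex.exp (-z*I) - Complex.exp (z*I)) * I / 2‖
      = ‖Complex.exp (-z*I) - Complex.exp (z*I)‖ / 2 := by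
    simp [norm_div, norm_mul]
  rw [h1]
  have h2 : ‖Complex.exp (-z*I) - Complex.exp (z*I)‖ ≤ Real.exp |z.im| + Real.exp |z.im| := by
    refine (norm_sub_le _ _).trans ?_
    gcongr
    · rw [Complex.norm_exp]
      apply Real.exp_le_exp.mpr
      simp [Complex.mul_re]
      exact le_abs_self _
    · rw [Complex.norm_exp]
      apply Real.exp_le_exp.mpr
      simp [Complex.mul_re]
      exact neg_le_abs _
  linarith

lemma aux_norm_cos_le (z : ℂ) : ‖Complex.cos z‖ ≤ Real.exp |z.im| := by
  rw [Complex.cos]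
  have h1 : ‖(Complex.exp (z*I) + Complex.exp (-z*I)) / 2‖
      = ‖Complex.exp (z*I) + Complex.exp (-z*I)‖ / 2 := by
    simp [norm_div]
  rw [h1]
  have h2 : ‖Complex.exp (z*I) + Complex.exp (-z*I)‖ ≤ Real.exp |z.im| + Real.exp |z.im| := by
    refine (norm_add_le _ _).trans ?_
    gcongr
    · rw [Complex.norm_exp]
      apply Real.exp_le_exp.mpr
      simp [Complex.mul_re]
      exact neg_le_abs _
    · rw [Complex.norm_exp]
      apply Real.exp_le_exp.mpr
      simp [Complex.mul_re]
      exact le_abs_self _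
  linarith

lemma aux_integrable {h : ℝ → ℂ} {x c b : ℝ} (hb : 0 < b)
    (hmeas : AEStronglyMeasurable h (volume.restrict (Set.Ici x)))
    (hbd : ∀ y, x ≤ y → ‖h y‖ ≤ c * Real.exp (-b * y)) :
    IntegrableOn h (Set.Ici x) :=
  Integrable.mono' ((aux_exp_integrableOn hb x).const_mul c) hmeas
    (ae_restrict_of_forall_mem measurableSet_Ici hbd)

lemma aux_key {h : ℝ → ℂ} {x c b : ℝ} (hb : 0 < b)
    (hmeas : AEStronglyMeasurable h (volume.restrict (Set.Ici x)))
    (hbd : ∀ y, x ≤ y → ‖h y‖ ≤ c * Real.exp (-b * y)) :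
    ‖∫ y in Set.Ici x, h y‖ ≤ c * Real.exp (-b * x) / b := by
  have hint : IntegrableOn (fun y => c * Real.exp (-b*y)) (Set.Ici x) :=
    (aux_exp_integrableOn hb x).const_mul c
  refine (norm_integral_le_of_norm_le hint
    (ae_restrict_of_forall_mem measurableSet_Ici hbd)).trans ?_
  rw [integral_const_mul, aux_exp_integral hb x]
  rw [mul_div_assoc]

lemma aux_tail {g : ℝ → ℂ} (hint : IntegrableOn g (Set.Ici 0)) {t : ℝ} (ht : 0 ≤ t) :
    (∫ y in Set.Ici t, g y) = (∫ y in Set.Ici 0, g y) - ∫ y in (0:ℝ)..t, g y := by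
  rw [intervalIntegral.integral_of_le ht, integral_Ici_eq_integral_Ioi,
      integral_Ici_eq_integral_Ioi]
  have h1 : Set.Ioc 0 t ∪ Set.Ioi t = Set.Ioi 0 := Set.Ioc_union_Ioi_eq_Ioi ht
  have h2 := setIntegral_union (Set.Ioc_disjoint_Ioi le_rfl) measurableSet_Ioi
    (hint.mono_set (fun y hy => le_of_lt hy.1))
    (hint.mono_set (fun y hy => ht.trans (le_of_lt hy))) (f := g) (μ := volume)
  rw [h1] at h2
  rw [h2]; ring

/-- Region III estimate. The solution u₊ = u_{CH_R} of the Volterra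
equation normalized at x → +∞ stays exponentially (in ℓ) close to the free wave
e^{iωx} for x ≥ R₂ = −1/Im(ω), for quasinormal-type frequencies ω. -/
theorem stmt_10 (κ A c₁ c₂ cI : ℝ)
    (hκ : 0 < κ) (hA : 0 < A) (hc₁ : 0 < c₁) (hc₂ : 0 < c₂) (hcI : 0 < cI) :
    ∃ C > 0, ∃ ct > 0, ∃ L₀ : ℕ, 1 ≤ L₀ ∧
      ∀ ℓ : ℕ, L₀ ≤ ℓ →
      ∀ V : ℝ → ℝ, Continuous V →
        (∀ x : ℝ, |V x| ≤ A * (ℓ : ℝ) ^ 2 * Real.exp (-2 * κ * |x|)) →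
      ∀ ω : ℂ, c₁ * (ℓ : ℝ) ≤ ω.re → ω.re ≤ c₂ * (ℓ : ℝ) →
        0 < -ω.im → -ω.im ≤ Real.exp (-cI * (ℓ : ℝ)) →
      ∀ u : ℝ → ℂ,
        (Continuous u ∧ (∃ B : ℝ, ∀ x : ℝ, 0 ≤ x → ‖Complex.exp (-(I * ω * x)) * u x‖ ≤ B) ∧
          (∀ x : ℝ, u x = Complex.exp (I * ω * x) -
            ∫ y in Set.Ici x, (Complex.sin (ω * ((x : ℂ) - (y : ℂ))) / ω) * (V y : ℂ) * u y)) →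
      ∀ x : ℝ, -1 / ω.im ≤ x →
        ‖Complex.exp (-(I * ω * x)) * u x - 1‖ +
          ‖Complex.exp (-(I * ω * x)) * (deriv u x - I * ω * u x)‖ ≤
            C * Real.exp (-ct * (ℓ : ℝ)) := by
  set M : ℝ := 2*(A/κ)*(1+1/c₁) + A/(c₁*κ) + 1 with hM_def
  have hM1 : 1 ≤ M := by
    have e1 : 0 ≤ 2*(A/κ)*(1+1/c₁) := by positivity
    have e2 : 0 ≤ A/(c₁*κ) := by positivity
    simp only [hM_def]; linarith
  have hM0 : 0 < M := lt_of_lt_of_le one_pos hM1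
  set a : ℝ := κ*cI^2/4 with ha_def
  have ha0 : 0 < a := by positivity
  refine ⟨1, one_pos, 1, one_pos, ⌈max ((M+3)/a) (2/(κ*cI))⌉₊ + 1, Nat.le_add_left 1 _, ?_⟩
  intro ℓ hℓ V hVcont hVbd ω hre1 hre2 him1 him2 u hu x hx
  obtain ⟨hu_cont, ⟨B, hB⟩, hVolt⟩ := hu
  set l : ℝ := (ℓ : ℝ) with hl_def
  -- basic largeness facts
  have hlL : (⌈max ((M+3)/a) (2/(κ*cI))⌉₊ + 1 : ℝ) ≤ l := by
    exact_mod_cast Nat.cast_le.mpr hℓ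
  have hl1 : 1 ≤ l := by
    have : (0:ℝ) ≤ ⌈max ((M+3)/a) (2/(κ*cI))⌉₊ := by positivity
    push_cast at hlL
    linarith
  have hl0 : 0 < l := lt_of_lt_of_le one_pos hl1
  have hlmax : max ((M+3)/a) (2/(κ*cI)) ≤ l := by
    have h1 := Nat.le_ceil (max ((M+3)/a) (2/(κ*cI)))
    push_cast at hlL
    linarith
  have hla : (M+3)/a ≤ l := le_trans (le_max_left _ _) hlmax
  have hlc : 2/(κ*cI) ≤ l := le_trans (le_max_right _ _) hlmax
  -- main smallness
  have hexp_big : a * l^2 ≤ κ * Real.exp (cI * l) := by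
    have h1 : cI*l/2 ≤ Real.exp (cI*l/2) := by
      have := Real.add_one_le_exp (cI*l/2); linarith
    have h2 : (cI*l/2)^2 ≤ Real.exp (cI*l/2) ^ 2 := by
      apply pow_le_pow_left₀ (by positivity) h1
    have h3 : Real.exp (cI*l/2) ^ 2 = Real.exp (cI*l) := by
      rw [← Real.exp_nat_mul]; ring_nf
    calc a * l^2 = κ * (cI*l/2)^2 := by rw [ha_def]; ring
      _ ≤ κ * Real.exp (cI*l) := by rw [← h3]; gcongr
  have hmain : M * l^2 * Real.exp (-(κ * Real.exp (cI*l))) ≤ Real.exp (-l) := by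
    have e1 : M ≤ Real.exp M := by have := Real.add_one_le_exp M; linarith
    have e2 : l^2 ≤ Real.exp (2*l) := by
      have h1 : l ≤ Real.exp l := by have := Real.add_one_le_exp l; linarith
      calc l^2 ≤ (Real.exp l)^2 := pow_le_pow_left₀ hl0.le h1 2
        _ = Real.exp (2*l) := by rw [← Real.exp_nat_mul]; ring_nf
    have e3 : M + 3*l ≤ κ * Real.exp (cI*l) := by
      have h4 : (M+3) ≤ a * l := by
        rw [div_le_iff₀ ha0] at hla; linarith [hla]
      have h6 : M + 3*l ≤ (M+3)*l := by nlinarith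
      nlinarith [hexp_big]
    calc M * l^2 * Real.exp (-(κ * Real.exp (cI*l)))
        ≤ Real.exp M * Real.exp (2*l) * Real.exp (-(κ * Real.exp (cI*l))) := by
          gcongr
        _ = Real.exp (M + 2*l + -(κ * Real.exp (cI*l))) := by
          rw [← Real.exp_add, ← Real.exp_add]
        _ ≤ Real.exp (-l) := Real.exp_le_exp.mpr (by linarith)
  -- frequency facts
  set μ : ℝ := -ω.im with hμ_def
  have hμ0 : 0 < μ := him1
  have hωim_neg : ω.im < 0 := by simp only [hμ_def] at hμ0; linarith
  have hcl_exp : cI * l ≤ Real.exp (cI*l) := by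
    have := Real.add_one_le_exp (cI*l); linarith
  have h2κ : 2/κ ≤ Real.exp (cI*l) := by
    refine le_trans ?_ hcl_exp
    have h5 : 2 ≤ l * (κ*cI) := by
      rw [div_le_iff₀ (by positivity : (0:ℝ) < κ*cI)] at hlc; linarith
    rw [div_le_iff₀ hκ]
    nlinarith
  have hμκ : μ ≤ κ/2 := by
    have h1 : μ ≤ Real.exp (-(cI*l)) := by rw [← neg_mul]; exact him2
    have h2 : Real.exp (-(cI*l)) ≤ κ/2 := by
      rw [Real.exp_neg]
      have h3 := one_div_le_one_div_of_le (by positivity : (0:ℝ) < 2/κ) h2κ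
      calc (Real.exp (cI*l))⁻¹ = 1/Real.exp (cI*l) := (one_div _).symm
        _ ≤ 1/(2/κ) := h3
        _ = κ/2 := by field_simp
    linarith
  set b : ℝ := 2*κ - 2*μ with hb_def
  have hκb : κ ≤ b := by simp only [hb_def]; linarith
  have hb0 : 0 < b := lt_of_lt_of_le hκ hκb
  have hxR : 1/μ ≤ x := by
    have h1 : -1/ω.im = 1/μ := by rw [hμ_def, div_neg, neg_div]
    rw [h1] at hx; exact hx
  have hR0 : 0 < 1/μ := by positivity
  have hx0 : 0 < x := lt_of_lt_of_le hR0 hxR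
  have hRbig : Real.exp (cI*l) ≤ 1/μ := by
    have h1 : μ ≤ Real.exp (-(cI*l)) := by rw [← neg_mul]; exact him2
    have h2 := one_div_le_one_div_of_le hμ0 h1
    calc Real.exp (cI*l) = 1/Real.exp (-(cI*l)) := by
          rw [Real.exp_neg, one_div, inv_inv]
      _ ≤ 1/μ := h2
  have hωnorm : c₁ * l ≤ ‖ω‖ := le_trans hre1 (by exact Complex.re_le_norm ω)
  have hωpos : 0 < ‖ω‖ := lt_of_lt_of_le (by positivity) hωnorm
  have hωne : ω ≠ 0 := by intro h; rw [h] at hωpos; simp at hωpos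
  have hB0 : 0 ≤ B := le_trans (norm_nonneg _) (hB 0 le_rfl)
  -- norms of exponentials
  have hnexp : ∀ t : ℝ, ‖Complex.exp (I*ω*t)‖ = Real.exp (μ*t) := by
    intro t
    rw [Complex.norm_exp]
    congr 1
    simp [Complex.mul_re, hμ_def]
  have hnexp' : ∀ t : ℝ, ‖Complex.exp (-(I*ω*t))‖ = Real.exp (-(μ*t)) := by
    intro t
    rw [Complex.norm_exp]
    congr 1
    simp [Complex.mul_re, hμ_def]
  have hexp_one : ∀ t : ℝ, Complex.exp (-(I*ω*t)) * Complex.exp (I*ω*t) = 1 := by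
    intro t; rw [← Complex.exp_add]; simp
  -- the two auxiliary integrands
  set gc : ℝ → ℂ := fun y => Complex.cos (ω*y) * (V y : ℂ) * u y with hgc_def
  set gs : ℝ → ℂ := fun y => Complex.sin (ω*y) * (V y : ℂ) * u y with hgs_def
  have hgc_cont : Continuous gc :=
    ((Complex.continuous_cos.comp (continuous_const.mul Complex.continuous_ofReal)).mul
      (Complex.continuous_ofReal.comp hVcont)).mul hu_cont
  have hgs_cont : Continuous gs :=
    ((Complex.continuous_sin.comp (continuous_const.mul Complex.continuous_ofReal)).mul
      (Complex.continuous_ofReal.comp hVcont)).mul hu_cont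
  have him_mul : ∀ y : ℝ, (ω * (y:ℂ)).im = ω.im * y := by
    intro y; simp [Complex.mul_im]
  have habs_im : |ω.im| = μ := by rw [hμ_def]; exact abs_of_neg hωim_neg
  have hVbd' : ∀ y : ℝ, 0 ≤ y → |V y| ≤ A*l^2*Real.exp (-2*κ*y) := by
    intro y hy; have h := hVbd y; rwa [_root_.abs_of_nonneg hy] at h
  have hnu : ∀ y : ℝ, 0 ≤ y → ‖u y‖ ≤ B * Real.exp (μ*y) := by
    intro y hy
    have h1 : u y = Complex.exp (I*ω*y) * (Complex.exp (-(I*ω*y)) * u y) := by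
      rw [← mul_assoc, mul_comm (Complex.exp (I*ω*(y:ℝ):ℂ)), hexp_one, one_mul]
    rw [h1, norm_mul, hnexp, mul_comm B]
    exact mul_le_mul_of_nonneg_left (hB y hy) (Real.exp_pos _).le
  have hcos_bd : ∀ y : ℝ, 0 ≤ y → ‖Complex.cos (ω*y)‖ ≤ Real.exp (μ*y) := by
    intro y hy
    refine (aux_norm_cos_le _).trans (Real.exp_le_exp.mpr ?_)
    rw [him_mul, abs_mul, _root_.abs_of_nonneg hy, habs_im]
  have hsin_bd : ∀ y : ℝ, 0 ≤ y → ‖Complex.sin (ω*y)‖ ≤ Real.exp (μ*y) := by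
    intro y hy
    refine (aux_norm_sin_le _).trans (Real.exp_le_exp.mpr ?_)
    rw [him_mul, abs_mul, _root_.abs_of_nonneg hy, habs_im]
  have hprod_exp : ∀ y : ℝ, Real.exp (μ*y) * (A*l^2*Real.exp (-2*κ*y)) * (B * Real.exp (μ*y))
      = (A*l^2*B) * Real.exp (-b*y) := by
    intro y
    have h1 : Real.exp (μ*y) * Real.exp (-2*κ*y) * Real.exp (μ*y) = Real.exp (-b*y) := by
      rw [← Real.exp_add, ← Real.exp_add]; congr 1; rw [hb_def]; ring
    calc Real.exp (μ*y) * (A*l^2*Real.exp (-2*κ*y)) * (B * Real.exp (μ*y))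
        = (A*l^2*B) * (Real.exp (μ*y) * Real.exp (-2*κ*y) * Real.exp (μ*y)) := by ring
      _ = (A*l^2*B) * Real.exp (-b*y) := by rw [h1]
  have hgc_bd : ∀ y : ℝ, 0 ≤ y → ‖gc y‖ ≤ (A*l^2*B) * Real.exp (-b*y) := by
    intro y hy
    have h0 : ‖gc y‖ = ‖Complex.cos (ω*y)‖ * |V y| * ‖u y‖ := by
      simp only [hgc_def, norm_mul, Complex.norm_real, Real.norm_eq_abs]
    rw [h0, ← hprod_exp y]
    exact mul_le_mul (mul_le_mul (hcos_bd y hy) (hVbd' y hy) (abs_nonneg _)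
      (Real.exp_pos _).le) (hnu y hy) (norm_nonneg _) (by positivity)
  have hgs_bd : ∀ y : ℝ, 0 ≤ y → ‖gs y‖ ≤ (A*l^2*B) * Real.exp (-b*y) := by
    intro y hy
    have h0 : ‖gs y‖ = ‖Complex.sin (ω*y)‖ * |V y| * ‖u y‖ := by
      simp only [hgs_def, norm_mul, Complex.norm_real, Real.norm_eq_abs]
    rw [h0, ← hprod_exp y]
    exact mul_le_mul (mul_le_mul (hsin_bd y hy) (hVbd' y hy) (abs_nonneg _)
      (Real.exp_pos _).le) (hnu y hy) (norm_nonneg _) (by positivity)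
  have hgc_int : ∀ t : ℝ, 0 ≤ t → IntegrableOn gc (Set.Ici t) := fun t ht =>
    aux_integrable hb0 hgc_cont.aestronglyMeasurable.restrict
      (fun y hy => hgc_bd y (ht.trans hy))
  have hgs_int : ∀ t : ℝ, 0 ≤ t → IntegrableOn gs (Set.Ici t) := fun t ht =>
    aux_integrable hb0 hgs_cont.aestronglyMeasurable.restrict
      (fun y hy => hgs_bd y (ht.trans hy))
  -- splitting of the Volterra kernel
  have hu_eq : ∀ t : ℝ, 0 ≤ t → u t = Complex.exp (I*ω*t)
      - (Complex.sin (ω*t)/ω * (∫ y in Set.Ici t, gc y)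
        - Complex.cos (ω*t)/ω * (∫ y in Set.Ici t, gs y)) := by
    intro t ht
    have hpt : ∀ y : ℝ, (Complex.sin (ω*((t:ℂ)-(y:ℂ)))/ω) * (V y:ℂ) * u y
        = Complex.sin (ω*t)/ω * gc y - Complex.cos (ω*t)/ω * gs y := by
      intro y
      simp only [hgc_def, hgs_def]
      rw [mul_sub ω, Complex.sin_sub]
      ring
    rw [hVolt t]
    congr 1
    simp_rw [hpt]
    rw [integral_sub ((hgc_int t ht).const_mul _) ((hgs_int t ht).const_mul _),
      integral_const_mul, integral_const_mul]
  -- tail representation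
  set Ic : ℂ := ∫ y in Set.Ici (0:ℝ), gc y with hIc_def
  set Is : ℂ := ∫ y in Set.Ici (0:ℝ), gs y with hIs_def
  set P : ℝ → ℂ := fun t => ∫ y in (0:ℝ)..t, gc y with hP_def
  set Q : ℝ → ℂ := fun t => ∫ y in (0:ℝ)..t, gs y with hQ_def
  have hJc : ∀ t : ℝ, 0 ≤ t → (∫ y in Set.Ici t, gc y) = Ic - P t := fun t ht => by
    rw [aux_tail (hgc_int 0 le_rfl) ht]
  have hJs : ∀ t : ℝ, 0 ≤ t → (∫ y in Set.Ici t, gs y) = Is - Q t := fun t ht => by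
    rw [aux_tail (hgs_int 0 le_rfl) ht]
  -- the smooth representative
  set F : ℝ → ℂ := fun t => Complex.exp (I*ω*t) - (Complex.sin (ω*t)/ω) * (Ic - P t)
      + (Complex.cos (ω*t)/ω) * (Is - Q t) with hF_def
  have hUF : ∀ t : ℝ, 0 < t → u t = F t := by
    intro t ht
    rw [hu_eq t ht.le, hJc t ht.le, hJs t ht.le, hF_def]
    ring
  -- derivatives of the pieces
  have h_exp : HasDerivAt (fun t : ℝ => Complex.exp (I*ω*t)) (I*ω*Complex.exp (I*ω*x)) x := by
    have h1 : HasDerivAt (fun z : ℂ => Complex.exp (I*ω*z)) (Complex.exp (I*ω*x) * (I*ω*1)) x :=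
      (Complex.hasDerivAt_exp (I*ω*x)).comp (x:ℂ) ((hasDerivAt_id (x:ℂ)).const_mul (I*ω))
    have h2 := h1.comp_ofReal
    convert h2 using 1
    ring
  have h_sin : HasDerivAt (fun t : ℝ => Complex.sin (ω*t)) (Complex.cos (ω*x) * ω) x := by
    have h1 : HasDerivAt (fun z : ℂ => Complex.sin (ω*z)) (Complex.cos (ω*x) * (ω*1)) x :=
      (Complex.hasDerivAt_sin (ω*x)).comp (x:ℂ) ((hasDerivAt_id (x:ℂ)).const_mul ω)
    have h2 := h1.comp_ofReal
    convert h2 using 1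
    ring
  have h_cos : HasDerivAt (fun t : ℝ => Complex.cos (ω*t)) (-Complex.sin (ω*x) * ω) x := by
    have h1 : HasDerivAt (fun z : ℂ => Complex.cos (ω*z)) (-Complex.sin (ω*x) * (ω*1)) x :=
      (Complex.hasDerivAt_cos (ω*x)).comp (x:ℂ) ((hasDerivAt_id (x:ℂ)).const_mul ω)
    have h2 := h1.comp_ofReal
    convert h2 using 1
    ring
  have h_P : HasDerivAt P (gc x) x :=
    intervalIntegral.integral_hasDerivAt_right (hgc_cont.intervalIntegrable 0 x)
      (hgc_cont.stronglyMeasurableAtFilter volume (nhds x)) hgc_cont.continuousAt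
  have h_Q : HasDerivAt Q (gs x) x :=
    intervalIntegral.integral_hasDerivAt_right (hgs_cont.intervalIntegrable 0 x)
      (hgs_cont.stronglyMeasurableAtFilter volume (nhds x)) hgs_cont.continuousAt
  have hF' : HasDerivAt F (I*ω*Complex.exp (I*ω*x)
      - ((Complex.cos (ω*x)*ω/ω) * (Ic - P x) + (Complex.sin (ω*x)/ω) * (-(gc x)))
      + ((-Complex.sin (ω*x)*ω/ω) * (Is - Q x) + (Complex.cos (ω*x)/ω) * (-(gs x)))) x :=
    (h_exp.sub ((h_sin.div_const ω).mul (h_P.const_sub Ic))).add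
      ((h_cos.div_const ω).mul (h_Q.const_sub Is))
  have hDval : (I*ω*Complex.exp (I*ω*(x:ℝ))
      - ((Complex.cos (ω*x)*ω/ω) * (Ic - P x) + (Complex.sin (ω*x)/ω) * (-(gc x)))
      + ((-Complex.sin (ω*x)*ω/ω) * (Is - Q x) + (Complex.cos (ω*x)/ω) * (-(gs x))))
      = I*ω*Complex.exp (I*ω*x) - Complex.cos (ω*x) * (Ic - P x)
        - Complex.sin (ω*x) * (Is - Q x) := by
    simp only [hgc_def, hgs_def]
    field_simp
    ring
  rw [hDval] at hF'
  have hu_deriv : HasDerivAt u (I*ω*Complex.exp (I*ω*x) - Complex.cos (ω*x) * (Ic - P x)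
      - Complex.sin (ω*x) * (Is - Q x)) x := by
    refine hF'.congr_of_eventuallyEq ?_
    filter_upwards [Ioi_mem_nhds hx0] with t ht
    exact hUF t ht
  have hderiv : deriv u x = I*ω*Complex.exp (I*ω*x) - Complex.cos (ω*x) * (Ic - P x)
      - Complex.sin (ω*x) * (Is - Q x) := hu_deriv.deriv
  -- key identity for deriv u - iω u
  have hexp_neg : Complex.exp (-(I*ω*x)) = Complex.cos (ω*x) - Complex.sin (ω*x) * I := by
    rw [show -(I*ω*(x:ℂ)) = -(ω*x)*I by ring, Complex.exp_mul_I, Complex.cos_neg,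
      Complex.sin_neg]
    ring
  have hE : deriv u x - I*ω*u x
      = -(Complex.exp (-(I*ω*x))) * ((Ic - P x) + I * (Is - Q x)) := by
    rw [hderiv, hu_eq x hx0.le, hJc x hx0.le, hJs x hx0.le, hexp_neg]
    have hI : (I:ℂ) * I = -1 := Complex.I_mul_I
    field_simp
    linear_combination (-(Complex.sin (ω*(x:ℝ)) * (Is - Q x))) * hI
  have hge_eq : (Ic - P x) + I * (Is - Q x)
      = ∫ y in Set.Ici x, Complex.exp (I*ω*y) * (V y:ℂ) * u y := by
    have hpt : ∀ y : ℝ, Complex.exp (I*ω*y) * (V y:ℂ) * u y = gc y + I * gs y := by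
      intro y
      rw [show (I*ω*(y:ℂ)) = (ω*y)*I by ring, Complex.exp_mul_I]
      simp only [hgc_def, hgs_def]
      ring
    rw [← hJc x hx0.le, ← hJs x hx0.le, ← integral_const_mul,
      ← integral_add (hgc_int x hx0.le) ((hgs_int x hx0.le).const_mul I)]
    exact (setIntegral_congr_fun measurableSet_Ici (fun y _ => hpt y)).symm
  -- the sup of the normalized solution on [1/μ, ∞)
  set S : ℝ := sSup ((fun t : ℝ => ‖Complex.exp (-(I*ω*t)) * u t‖) '' Set.Ici (1/μ)) with hS_def
  have hSbdd : BddAbove ((fun t : ℝ => ‖Complex.exp (-(I*ω*t)) * u t‖) '' Set.Ici (1/μ)) := by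
    refine ⟨B, ?_⟩
    rintro s ⟨y, hy, rfl⟩
    exact hB y (le_trans hR0.le hy)
  have hfS : ∀ y, 1/μ ≤ y → ‖Complex.exp (-(I*ω*y)) * u y‖ ≤ S := fun y hy =>
    le_csSup hSbdd ⟨y, hy, rfl⟩
  have hS0 : 0 ≤ S := le_trans (norm_nonneg _) (hfS _ le_rfl)
  have hnuS : ∀ y, 1/μ ≤ y → ‖u y‖ ≤ S * Real.exp (μ*y) := by
    intro y hy
    have h1 : u y = Complex.exp (I*ω*y) * (Complex.exp (-(I*ω*y)) * u y) := by
      rw [← mul_assoc, mul_comm (Complex.exp (I*ω*(y:ℝ):ℂ)), hexp_one, one_mul]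
    rw [h1, norm_mul, hnexp, mul_comm (Real.exp (μ*y))]
    exact mul_le_mul_of_nonneg_right (hfS y hy) (Real.exp_pos _).le
  -- bound on the sin-kernel integral, for any base point x' ≥ 1/μ
  have hker_bd : ∀ x', 1/μ ≤ x' →
      ‖∫ y in Set.Ici x', (Complex.sin (ω*((x':ℂ)-(y:ℂ)))/ω) * (V y:ℂ) * u y‖
      ≤ (A*l^2*S/‖ω‖) * Real.exp (-b*x')/b := by
    intro x' hx'
    have hx'0 : (0:ℝ) ≤ x' := le_trans hR0.le hx'
    refine aux_key hb0 (Continuous.aestronglyMeasurable ?_).restrict ?_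
    · exact ((Complex.continuous_sin.comp ((continuous_const.mul
        (continuous_const.sub Complex.continuous_ofReal)))).div_const ω).mul
        (Complex.continuous_ofReal.comp hVcont) |>.mul hu_cont
    · intro y hy
      have hy0 : (0:ℝ) ≤ y := hx'0.trans hy
      have hyR : 1/μ ≤ y := hx'.trans hy
      have hsin : ‖Complex.sin (ω*((x':ℂ)-(y:ℂ)))‖ ≤ Real.exp (μ*y) := by
        refine (aux_norm_sin_le _).trans (Real.exp_le_exp.mpr ?_)
        have h1 : (ω*((x':ℂ)-(y:ℂ))).im = ω.im * (x' - y) := by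
          simp [Complex.mul_im]
        rw [h1, abs_mul, habs_im]
        have h3 : |x' - y| = y - x' := by
          rw [abs_sub_comm, _root_.abs_of_nonneg (by linarith)]
        rw [h3]
        exact mul_le_mul_of_nonneg_left (by linarith : y - x' ≤ y) hμ0.le
      have h0 : ‖(Complex.sin (ω*((x':ℂ)-(y:ℂ)))/ω) * (V y:ℂ) * u y‖
          = ‖Complex.sin (ω*((x':ℂ)-(y:ℂ)))‖/‖ω‖ * |V y| * ‖u y‖ := by
        simp only [norm_mul, norm_div, Complex.norm_real, Real.norm_eq_abs]
      rw [h0]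
      have hchain : ‖Complex.sin (ω*((x':ℂ)-(y:ℂ)))‖/‖ω‖ * |V y| * ‖u y‖
          ≤ (Real.exp (μ*y)/‖ω‖) * (A*l^2*Real.exp (-2*κ*y)) * (S * Real.exp (μ*y)) := by
        refine mul_le_mul (mul_le_mul ?_ (hVbd' y hy0) (abs_nonneg _) (by positivity))
          (hnuS y hyR) (norm_nonneg _) (by positivity)
        exact (div_le_div_iff_of_pos_right hωpos).mpr hsin
      refine hchain.trans (le_of_eq ?_)
      have h1 : Real.exp (μ*y) * Real.exp (-2*κ*y) * Real.exp (μ*y) = Real.exp (-b*y) := by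
        rw [← Real.exp_add, ← Real.exp_add]; congr 1; rw [hb_def]; ring
      calc (Real.exp (μ*y)/‖ω‖) * (A*l^2*Real.exp (-2*κ*y)) * (S * Real.exp (μ*y))
          = (A*l^2*S/‖ω‖) * (Real.exp (μ*y) * Real.exp (-2*κ*y) * Real.exp (μ*y)) := by ring
        _ = (A*l^2*S/‖ω‖) * Real.exp (-b*y) := by rw [h1]
  -- bound on the distance to the free wave
  have hf_part : ∀ x', 1/μ ≤ x' → ‖Complex.exp (-(I*ω*x')) * u x' - 1‖
      ≤ (A*l^2*S/‖ω‖) * Real.exp (-b*x')/b := by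
    intro x' hx'
    have hx'0 : (0:ℝ) ≤ x' := le_trans hR0.le hx'
    have h1 : Complex.exp (-(I*ω*x')) * u x' - 1
        = -(Complex.exp (-(I*ω*x'))) *
          ∫ y in Set.Ici x', (Complex.sin (ω*((x':ℂ)-(y:ℂ)))/ω) * (V y:ℂ) * u y := by
      rw [hVolt x', mul_sub, hexp_one x']
      ring
    rw [h1, norm_mul, norm_neg, hnexp']
    have h2 : Real.exp (-(μ*x')) ≤ 1 := by
      calc Real.exp (-(μ*x')) ≤ Real.exp 0 :=
          Real.exp_le_exp.mpr (neg_nonpos.mpr (mul_nonneg hμ0.le hx'0))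
        _ = 1 := Real.exp_zero
    calc Real.exp (-(μ*x')) * ‖∫ y in Set.Ici x', (Complex.sin (ω*((x':ℂ)-(y:ℂ)))/ω) * (V y:ℂ) * u y‖
        ≤ 1 * ((A*l^2*S/‖ω‖) * Real.exp (-b*x')/b) :=
          mul_le_mul h2 (hker_bd x' hx') (norm_nonneg _) zero_le_one
      _ = (A*l^2*S/‖ω‖) * Real.exp (-b*x')/b := one_mul _
  -- coefficient smallness
  have hexp_bx : ∀ x', 1/μ ≤ x' →
      Real.exp (-b*x') ≤ Real.exp (-(κ * Real.exp (cI*l))) := by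
    intro x' hx'
    have hx'E : Real.exp (cI*l) ≤ x' := hRbig.trans hx'
    apply Real.exp_le_exp.mpr
    have h2 : κ * Real.exp (cI*l) ≤ b * x' := by
      calc κ * Real.exp (cI*l) ≤ κ * x' := by gcongr
        _ ≤ b * x' := mul_le_mul_of_nonneg_right hκb
            (le_trans (Real.exp_pos _).le hx'E)
    linarith
  have hll2 : l ≤ l^2 := by
    calc l = l * 1 := (mul_one l).symm
      _ ≤ l * l := mul_le_mul_of_nonneg_left hl1 hl0.le
      _ = l^2 := (sq l).symm
  have hcoef : ∀ x', 1/μ ≤ x' → (A*l^2*S/‖ω‖) * Real.exp (-b*x')/b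
      ≤ S * ((A/(c₁*κ)) * l^2 * Real.exp (-(κ * Real.exp (cI*l)))) := by
    intro x' hx'
    calc (A*l^2*S/‖ω‖) * Real.exp (-b*x')/b
        ≤ (A*l^2*S/(c₁*l)) * Real.exp (-(κ * Real.exp (cI*l)))/κ := by
          gcongr
          all_goals first
            | exact hωnorm
            | exact Real.exp_le_exp.mp (hexp_bx x' hx')
            | exact hκb
            | positivity
      _ = S * ((A/(c₁*κ)) * l * Real.exp (-(κ * Real.exp (cI*l)))) := by
          field_simp
      _ ≤ S * ((A/(c₁*κ)) * l^2 * Real.exp (-(κ * Real.exp (cI*l)))) := by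
          apply mul_le_mul_of_nonneg_left ?_ hS0
          apply mul_le_mul_of_nonneg_right ?_ (Real.exp_pos _).le
          exact mul_le_mul_of_nonneg_left hll2 (by positivity)
  have hq : (A/(c₁*κ)) * l^2 * Real.exp (-(κ * Real.exp (cI*l))) ≤ Real.exp (-l) := by
    refine le_trans ?_ hmain
    have hAM : A/(c₁*κ) ≤ M := by
      have h1 : 0 ≤ 2*(A/κ)*(1+1/c₁) := by positivity
      simp only [hM_def]
      linarith
    gcongr
  have hhalf : Real.exp (-l) ≤ 1/2 := by
    have h1 : Real.exp (-l) ≤ Real.exp (-1) := Real.exp_le_exp.mpr (by linarith)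
    have h3 : (2:ℝ) ≤ Real.exp 1 := by
      have := Real.add_one_le_exp 1; linarith
    calc Real.exp (-l) ≤ Real.exp (-1) := h1
      _ = (Real.exp 1)⁻¹ := Real.exp_neg 1
      _ ≤ 2⁻¹ := inv_anti₀ two_pos h3
      _ = 1/2 := by norm_num
  -- bootstrap: S ≤ 2
  have hS2 : S ≤ 2 := by
    have hub : sSup ((fun t : ℝ => ‖Complex.exp (-(I*ω*t)) * u t‖) '' Set.Ici (1/μ))
        ≤ 1 + S/2 := by
      refine csSup_le ((Set.nonempty_Ici).image _) ?_
      rintro s ⟨y, hy, rfl⟩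
      have h3 : ‖Complex.exp (-(I*ω*y)) * u y - 1‖ ≤ S * (1/2) := by
        refine (hf_part y hy).trans (le_trans (hcoef y hy) ?_)
        refine le_trans (mul_le_mul_of_nonneg_left hq hS0) ?_
        exact mul_le_mul_of_nonneg_left hhalf hS0
      calc ‖Complex.exp (-(I*ω*y)) * u y‖
          = ‖(Complex.exp (-(I*ω*y)) * u y - 1) + 1‖ := by rw [sub_add_cancel]
        _ ≤ ‖Complex.exp (-(I*ω*y)) * u y - 1‖ + ‖(1:ℂ)‖ := norm_add_le _ _
        _ = ‖Complex.exp (-(I*ω*y)) * u y - 1‖ + 1 := by rw [norm_one]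
        _ ≤ S * (1/2) + 1 := by linarith
        _ = 1 + S/2 := by ring
    rw [← hS_def] at hub
    linarith
  -- bound on the derivative part
  have hJbd : ‖∫ y in Set.Ici x, Complex.exp (I*ω*y) * (V y:ℂ) * u y‖
      ≤ (A*l^2*S) * Real.exp (-b*x)/b := by
    refine aux_key hb0 (Continuous.aestronglyMeasurable ?_).restrict ?_
    · exact ((Complex.continuous_exp.comp (continuous_const.mul
        Complex.continuous_ofReal)).mul (Complex.continuous_ofReal.comp hVcont)).mul hu_cont
    · intro y hy
      have hy0 : (0:ℝ) ≤ y := (le_trans hR0.le hxR).trans hy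
      have hyR : 1/μ ≤ y := hxR.trans hy
      have h0 : ‖Complex.exp (I*ω*y) * (V y:ℂ) * u y‖ = Real.exp (μ*y) * |V y| * ‖u y‖ := by
        simp only [norm_mul, Complex.norm_real, Real.norm_eq_abs, hnexp]
      rw [h0]
      have hchain : Real.exp (μ*y) * |V y| * ‖u y‖
          ≤ Real.exp (μ*y) * (A*l^2*Real.exp (-2*κ*y)) * (S * Real.exp (μ*y)) :=
        mul_le_mul (mul_le_mul_of_nonneg_left (hVbd' y hy0) (Real.exp_pos _).le)
          (hnuS y hyR) (norm_nonneg _) (by positivity)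
      refine hchain.trans (le_of_eq ?_)
      have h1 : Real.exp (μ*y) * Real.exp (-2*κ*y) * Real.exp (μ*y) = Real.exp (-b*y) := by
        rw [← Real.exp_add, ← Real.exp_add]; congr 1; rw [hb_def]; ring
      calc Real.exp (μ*y) * (A*l^2*Real.exp (-2*κ*y)) * (S * Real.exp (μ*y))
          = (A*l^2*S) * (Real.exp (μ*y) * Real.exp (-2*κ*y) * Real.exp (μ*y)) := by ring
        _ = (A*l^2*S) * Real.exp (-b*y) := by rw [h1]
  have hexp_le1 : Real.exp (-(μ*x)) ≤ 1 := by
    calc Real.exp (-(μ*x)) ≤ Real.exp 0 :=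
        Real.exp_le_exp.mpr (neg_nonpos.mpr (mul_nonneg hμ0.le hx0.le))
      _ = 1 := Real.exp_zero
  have hd_part : ‖Complex.exp (-(I*ω*x)) * (deriv u x - I*ω*u x)‖
      ≤ (A*l^2*S) * Real.exp (-b*x)/b := by
    rw [hE, hge_eq, norm_mul, norm_mul, norm_neg, hnexp']
    calc Real.exp (-(μ*x)) * (Real.exp (-(μ*x)) *
          ‖∫ y in Set.Ici x, Complex.exp (I*ω*y) * (V y:ℂ) * u y‖)
        ≤ 1 * (1 * ‖∫ y in Set.Ici x, Complex.exp (I*ω*y) * (V y:ℂ) * u y‖) := by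
          apply mul_le_mul hexp_le1 (mul_le_mul hexp_le1 le_rfl (norm_nonneg _) zero_le_one)
            (by positivity) zero_le_one
      _ = ‖∫ y in Set.Ici x, Complex.exp (I*ω*y) * (V y:ℂ) * u y‖ := by ring
      _ ≤ (A*l^2*S) * Real.exp (-b*x)/b := hJbd
  have hcoef2 : (A*l^2*S) * Real.exp (-b*x)/b
      ≤ S * ((A/κ) * l^2 * Real.exp (-(κ * Real.exp (cI*l)))) := by
    calc (A*l^2*S) * Real.exp (-b*x)/b
        ≤ (A*l^2*S) * Real.exp (-(κ * Real.exp (cI*l)))/κ := by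
          gcongr
          all_goals first
            | exact Real.exp_le_exp.mp (hexp_bx x hxR)
            | exact hκb
            | positivity
      _ = S * ((A/κ) * l^2 * Real.exp (-(κ * Real.exp (cI*l)))) := by
          field_simp
  -- combine
  have hsum2 : S * ((A/(c₁*κ)) * l^2 * Real.exp (-(κ * Real.exp (cI*l))))
      + S * ((A/κ) * l^2 * Real.exp (-(κ * Real.exp (cI*l))))
      ≤ M * l^2 * Real.exp (-(κ * Real.exp (cI*l))) := by
    have hEp : (0:ℝ) < l^2 * Real.exp (-(κ * Real.exp (cI*l))) := by positivity
    have h2 : S * (A/(c₁*κ)) + S * (A/κ) ≤ M := by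
      have h3 : S * (A/(c₁*κ)) ≤ 2 * (A/(c₁*κ)) :=
        mul_le_mul_of_nonneg_right hS2 (by positivity)
      have h4 : S * (A/κ) ≤ 2 * (A/κ) := mul_le_mul_of_nonneg_right hS2 (by positivity)
      have h5 : 2*(A/(c₁*κ)) + 2*(A/κ) = 2*(A/κ)*(1+1/c₁) := by field_simp; ring
      have h6 : (0:ℝ) ≤ A/(c₁*κ) := by positivity
      simp only [hM_def]
      linarith
    calc S * ((A/(c₁*κ)) * l^2 * Real.exp (-(κ * Real.exp (cI*l))))
        + S * ((A/κ) * l^2 * Real.exp (-(κ * Real.exp (cI*l))))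
        = (S * (A/(c₁*κ)) + S * (A/κ)) * (l^2 * Real.exp (-(κ * Real.exp (cI*l)))) := by ring
      _ ≤ M * (l^2 * Real.exp (-(κ * Real.exp (cI*l)))) :=
          mul_le_mul_of_nonneg_right h2 hEp.le
      _ = M * l^2 * Real.exp (-(κ * Real.exp (cI*l))) := by ring
  have hgoal : ‖Complex.exp (-(I*ω*x)) * u x - 1‖
      + ‖Complex.exp (-(I*ω*x)) * (deriv u x - I*ω*u x)‖ ≤ Real.exp (-l) := by
    have h1 := (hf_part x hxR).trans (hcoef x hxR)
    have h2 := hd_part.trans hcoef2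
    exact le_trans (add_le_add h1 h2) (le_trans hsum2 hmain)
  calc ‖Complex.exp (-(I*ω*x)) * u x - 1‖
      + ‖Complex.exp (-(I*ω*x)) * (deriv u x - I*ω*u x)‖
      ≤ Real.exp (-l) := hgoal
    _ = 1 * Real.exp (-1 * l) := by rw [one_mul, neg_one_mul]
end

section
/- Let κ > 0, ε > 0, T ∈ ℂ with T ≠ 0, and let ω ∈ ℂ with ω ≠ 0 and 0 ≤ −Im(ω)/κ < 1/2. Let A, B : [0, ε] → ℂ be continuously differentiable with A(0) ≠ 0, and define G(x) := T · x^{−iω/κ} · A(x) + B(x) for x ∈ (0, ε), with the principal branch of the complex power. Then ∫₀^ε |G′(x)|² dx = ∞; in particular G does not belong to H¹((0, ε)). -/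
open MeasureTheory Set Complex Topology

/-- H¹ blowup at the Cauchy horizon. If G(x) = T x^{−iω/κ} A(x) + B(x)
with T ≠ 0, ω ≠ 0, 0 ≤ −Im(ω)/κ < 1/2, and A, B continuously differentiable on [0, ε]
with A(0) ≠ 0, then ∫₀^ε |G′|² dx = ∞, i.e. G ∉ H¹((0, ε)). -/
theorem stmt_18 (κ ε : ℝ) (hκ : 0 < κ) (hε : 0 < ε)
    (T : ℂ) (hT : T ≠ 0)
    (ω : ℂ) (hω : ω ≠ 0) (hβ0 : 0 ≤ -ω.im / κ) (hβ : -ω.im / κ < 1 / 2)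
    (A B : ℝ → ℂ)
    (hA : ContDiffOn ℝ 1 A (Icc 0 ε)) (hB : ContDiffOn ℝ 1 B (Icc 0 ε))
    (hA0 : A 0 ≠ 0)
    (G : ℝ → ℂ)
    (hG : ∀ x ∈ Ioo (0 : ℝ) ε,
      G x = T * ((x : ℂ)) ^ (-(I * ω) / (κ : ℂ)) * A x + B x) :
    ¬ IntegrableOn (fun x : ℝ => ‖deriv G x‖ ^ 2) (Ioo 0 ε) := by
  intro hI
  set p : ℂ := -(I * ω) / (κ : ℂ) with hp
  have hκℂ : (κ : ℂ) ≠ 0 := by exact_mod_cast hκ.ne'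
  have hpne : p ≠ 0 :=
    div_ne_zero (neg_ne_zero.2 (mul_ne_zero I_ne_zero hω)) hκℂ
  have hpre : p.re = ω.im / κ := by
    rw [hp, Complex.div_re]
    simp [Complex.normSq_ofReal]
    field_simp
  have hpre0 : p.re ≤ 0 := by
    rw [hpre]
    have : 0 ≤ -(ω.im / κ) := by rwa [← neg_div]
    linarith
  have hUD : UniqueDiffOn ℝ (Icc (0:ℝ) ε) := uniqueDiffOn_Icc hε
  set A' := derivWithin A (Icc 0 ε) with hA'
  set B' := derivWithin B (Icc 0 ε) with hB'
  have hA'c : ContinuousOn A' (Icc 0 ε) := hA.continuousOn_derivWithin hUD le_rfl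
  have hB'c : ContinuousOn B' (Icc 0 ε) := hB.continuousOn_derivWithin hUD le_rfl
  obtain ⟨MA, hMA⟩ := (isCompact_Icc).exists_bound_of_continuousOn hA'c
  obtain ⟨MB, hMB⟩ := (isCompact_Icc).exists_bound_of_continuousOn hB'c
  have hMA0 : 0 ≤ MA := le_trans (norm_nonneg _) (hMA 0 ⟨le_rfl, hε.le⟩)
  have hMB0 : 0 ≤ MB := le_trans (norm_nonneg _) (hMB 0 ⟨le_rfl, hε.le⟩)
  set a := ‖A 0‖ with ha
  have ha0 : 0 < a := norm_pos_iff.2 hA0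
  have hAc0 : ContinuousWithinAt A (Icc 0 ε) 0 := (hA.continuousOn) 0 ⟨le_rfl, hε.le⟩
  rw [Metric.continuousWithinAt_iff] at hAc0
  obtain ⟨δ₁, hδ₁0, hδ₁⟩ := hAc0 (a/2) (by positivity)
  set c : ℝ := ‖T‖ * ‖p‖ * a / 4 with hc
  have hc0 : 0 < c := by
    have h1 := norm_pos_iff.2 hT
    have h2 := norm_pos_iff.2 hpne
    positivity
  set δ₂ : ℝ := c / (‖T‖ * MA + MB + 1) with hδ₂
  have hδ₂0 : 0 < δ₂ := by positivity
  set δ : ℝ := min (min (ε/2) 1) (min δ₁ δ₂) with hδ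
  have hδ0 : 0 < δ := by positivity
  have hδε : δ ≤ ε / 2 := le_trans (min_le_left _ _) (min_le_left _ _)
  have hδ1 : δ ≤ 1 := le_trans (min_le_left _ _) (min_le_right _ _)
  have key : ∀ x ∈ Ioo (0:ℝ) δ, c^2 * x ^ (-2 : ℝ) ≤ ‖deriv G x‖ ^ 2 := by
    intro x hx
    have hx0 : 0 < x := hx.1
    have hx1 : x ≤ 1 := le_trans hx.2.le hδ1
    have hxε : x < ε := lt_of_lt_of_le hx.2 (by linarith)
    have hxIcc : x ∈ Icc (0:ℝ) ε := ⟨hx0.le, hxε.le⟩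
    have hmem : Icc (0:ℝ) ε ∈ 𝓝 x := Icc_mem_nhds hx0 hxε
    have hAd : HasDerivAt A (A' x) x := by
      have h1 : DifferentiableAt ℝ A x :=
        ((hA.differentiableOn one_ne_zero) x hxIcc).differentiableAt hmem
      have h2 : A' x = deriv A x := derivWithin_of_mem_nhds hmem
      rw [h2]; exact h1.hasDerivAt
    have hBd : HasDerivAt B (B' x) x := by
      have h1 : DifferentiableAt ℝ B x :=
        ((hB.differentiableOn one_ne_zero) x hxIcc).differentiableAt hmem
      have h2 : B' x = deriv B x := derivWithin_of_mem_nhds hmem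
      rw [h2]; exact h1.hasDerivAt
    have hcp : HasDerivAt (fun y : ℝ => (y : ℂ) ^ p) (p * (x : ℂ) ^ (p - 1)) x := by
      have h0 : HasDerivAt (fun z : ℂ => z ^ p) (p * (x:ℂ) ^ (p - 1)) (x:ℂ) :=
        (Complex.hasStrictDerivAt_cpow_const (c := p) (x := (x:ℂ))
          (ofReal_mem_slitPlane.2 hx0)).hasDerivAt
      exact h0.comp_ofReal
    have hFd : HasDerivAt (fun y : ℝ => T * ((y:ℂ) ^ p) * A y + B y)
        (T * (p * (x:ℂ) ^ (p-1) * A x) + (T * ((x:ℂ) ^ p * A' x) + B' x)) x := by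
      have h1 := ((hcp.const_mul T).mul hAd).add hBd
      exact h1.congr_deriv (by ring)
    have hGF : deriv G x
        = T * (p * (x:ℂ) ^ (p-1) * A x) + (T * ((x:ℂ) ^ p * A' x) + B' x) := by
      have heq : G =ᶠ[𝓝 x] fun y : ℝ => T * ((y:ℂ) ^ p) * A y + B y := by
        filter_upwards [Ioo_mem_nhds hx0 hxε] with y hy
        exact hG y hy
      rw [heq.deriv_eq, hFd.deriv]
    have hrp : (0:ℝ) < x ^ (p.re - 1) := Real.rpow_pos_of_pos hx0 _
    have hxp1 : ‖(x:ℂ) ^ (p-1)‖ = x ^ (p.re - 1) := by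
      rw [Complex.norm_cpow_eq_rpow_re_of_pos hx0]
      norm_num
    have hxp : ‖(x:ℂ) ^ p‖ = x ^ p.re := by
      rw [Complex.norm_cpow_eq_rpow_re_of_pos hx0]
    have hmain : 2 * c * x ^ (p.re - 1) ≤ ‖T * (p * (x:ℂ) ^ (p-1) * A x)‖ := by
      rw [norm_mul, norm_mul, norm_mul, hxp1]
      have hAx : a / 2 ≤ ‖A x‖ := by
        have hd := hδ₁ hxIcc (by
          rw [Real.dist_eq, sub_zero, abs_of_pos hx0]
          exact lt_of_lt_of_le hx.2 (le_trans (min_le_right _ _) (min_le_left _ _)))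
        have h3 := norm_sub_norm_le (A 0) (A x)
        rw [← dist_eq_norm, dist_comm] at h3
        have h4 := le_trans h3 hd.le
        linarith
      calc 2 * c * x ^ (p.re - 1) = ‖T‖ * (‖p‖ * x ^ (p.re - 1) * (a/2)) := by
            rw [hc]; ring
        _ ≤ ‖T‖ * (‖p‖ * x ^ (p.re - 1) * ‖A x‖) := by gcongr
    have herr : ‖T * ((x:ℂ) ^ p * A' x) + B' x‖ ≤ c * x ^ (p.re - 1) := by
      have hxpe : x ^ p.re ≤ x * x ^ (p.re - 1) := by
        have h6 : x ^ p.re = x ^ (1 + (p.re - 1)) := by ring_nf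
        rw [h6, Real.rpow_add hx0, Real.rpow_one]
      have hone : (1:ℝ) ≤ x * x ^ (p.re - 1) := by
        rw [show x * x ^ (p.re - 1) = x ^ (1:ℝ) * x ^ (p.re - 1) by rw [Real.rpow_one],
          ← Real.rpow_add hx0]
        calc (1:ℝ) = x ^ (0:ℝ) := by rw [Real.rpow_zero]
          _ ≤ x ^ (1 + (p.re - 1)) := by
              apply Real.rpow_le_rpow_of_exponent_ge hx0 hx1
              linarith
      have hxδ₂ : x ≤ δ₂ := le_trans hx.2.le (le_trans (min_le_right _ _) (min_le_right _ _))
      calc ‖T * ((x:ℂ) ^ p * A' x) + B' x‖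
          ≤ ‖T * ((x:ℂ) ^ p * A' x)‖ + ‖B' x‖ := norm_add_le _ _
        _ ≤ ‖T‖ * (x ^ p.re * MA) + MB := by
            rw [norm_mul, norm_mul, hxp]
            gcongr
            · exact hMA x hxIcc
            · exact hMB x hxIcc
        _ ≤ ‖T‖ * ((x * x ^ (p.re - 1)) * MA) + MB * (x * x ^ (p.re - 1)) := by
            have h1 : ‖T‖ * (x ^ p.re * MA) ≤ ‖T‖ * ((x * x ^ (p.re - 1)) * MA) := by gcongr
            have h2 : MB ≤ MB * (x * x ^ (p.re - 1)) := le_mul_of_one_le_right hMB0 hone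
            linarith
        _ = (‖T‖ * MA + MB) * x * x ^ (p.re - 1) := by ring
        _ ≤ (‖T‖ * MA + MB + 1) * δ₂ * x ^ (p.re - 1) := by
            have : (‖T‖ * MA + MB) * x ≤ (‖T‖ * MA + MB + 1) * δ₂ := by
              apply mul_le_mul (by linarith) hxδ₂ hx0.le (by positivity)
            gcongr
        _ = c * x ^ (p.re - 1) := by
            rw [hδ₂]
            field_simp
    have hD : c * x ^ (p.re - 1) ≤ ‖deriv G x‖ := by
      rw [hGF]
      have h5 : ‖T * (p * (x:ℂ) ^ (p-1) * A x)‖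
          ≤ ‖T * (p * (x:ℂ) ^ (p-1) * A x) + (T * ((x:ℂ) ^ p * A' x) + B' x)‖
            + ‖T * ((x:ℂ) ^ p * A' x) + B' x‖ := by
        simpa using norm_sub_le
          (T * (p * (x:ℂ) ^ (p-1) * A x) + (T * ((x:ℂ) ^ p * A' x) + B' x))
          (T * ((x:ℂ) ^ p * A' x) + B' x)
      linarith
    have hm1 : x ^ (-1 : ℝ) ≤ x ^ (p.re - 1) :=
      Real.rpow_le_rpow_of_exponent_ge hx0 hx1 (by linarith)
    have hcx : c * x ^ (-1 : ℝ) ≤ ‖deriv G x‖ := by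
      calc c * x ^ (-1:ℝ) ≤ c * x ^ (p.re - 1) := by gcongr
        _ ≤ ‖deriv G x‖ := hD
    have hsq : (c * x ^ (-1:ℝ))^2 ≤ ‖deriv G x‖^2 := by
      apply pow_le_pow_left₀ (by positivity) hcx
    calc c^2 * x ^ (-2:ℝ) = (c * x ^ (-1:ℝ))^2 := by
          rw [mul_pow, ← Real.rpow_natCast (x ^ (-1:ℝ)) 2, ← Real.rpow_mul hx0.le]
          norm_num
      _ ≤ ‖deriv G x‖^2 := hsq
  -- now derive contradiction
  have hsub : Ioo (0:ℝ) δ ⊆ Ioo 0 ε := Ioo_subset_Ioo le_rfl (by linarith)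
  have hI2 : IntegrableOn (fun x : ℝ => ‖deriv G x‖ ^ 2) (Ioo 0 δ) := hI.mono_set hsub
  have hInt : IntegrableOn (fun x : ℝ => c^2 * x ^ (-2:ℝ)) (Ioo 0 δ) := by
    apply Integrable.mono' hI2
    · have hcont : ContinuousOn (fun x : ℝ => c^2 * x ^ (-2:ℝ)) (Ioo 0 δ) := by
        intro x hx
        exact (continuousAt_const.mul
          (Real.continuousAt_rpow_const x _ (Or.inl hx.1.ne'))).continuousWithinAt
      exact hcont.aestronglyMeasurable measurableSet_Ioo
    · rw [ae_restrict_iff' measurableSet_Ioo]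
      filter_upwards with x hx
      have hnn : ‖c^2 * x ^ (-2:ℝ)‖ = c^2 * x ^ (-2:ℝ) :=
        Real.norm_of_nonneg (mul_nonneg (sq_nonneg c) (Real.rpow_nonneg hx.1.le _))
      rw [hnn]
      exact key x hx
  have hInt2 : IntegrableOn (fun x : ℝ => x ^ (-2:ℝ)) (Ioo 0 δ) := by
    have h8 := hInt.const_mul (c^2)⁻¹
    have h7 : (fun x : ℝ => (c^2)⁻¹ * (c^2 * x ^ (-2:ℝ))) = fun x : ℝ => x ^ (-2:ℝ) := by
      funext x
      field_simp
    rwa [h7] at h8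
  rw [intervalIntegral.integrableOn_Ioo_rpow_iff hδ0] at hInt2
  linarith
end
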